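/- arXiv:2507.00194 — 15 statements merged into one kernel-verified Lean document; each statement's English description precedes it below -/
import Mathlib

section
/- Let P be an algebra of S-probabilities and let p ∈ P. If p(s) ≤ 1/2 for all s ∈ S, then p = 0 (the constant zero function), and if p(s) ≥ 1/2 for all s ∈ S, then p = 1 (the constant one function). In particular, every element of P other than 0 and 1 is varying. -/
/-- An `S`-probability: a function `p : S → ℝ` with `0 ≤ p s ≤ 1` for all `s`. -/
def IsProb (S : Type*) (p : S → ℝ) : Prop := ∀ s, 0 ≤ p s ∧ p s ≤ 1

/-- An algebra of `S`-probabilities: a set of `S`-probabilities containing the constant `0`,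
closed under `p ↦ 1 - p`, and containing `p + q + r` for pairwise orthogonal `p, q, r`
(where `p ⊥ q` means `p ≤ 1 - q`). -/
def IsAlg (S : Type*) (P : Set (S → ℝ)) : Prop :=
  (∀ p ∈ P, IsProb S p) ∧
  (0 : S → ℝ) ∈ P ∧
  (∀ p ∈ P, 1 - p ∈ P) ∧
  ∀ p q r : S → ℝ, p ∈ P → q ∈ P → r ∈ P →
    p ≤ 1 - q → q ≤ 1 - r → r ≤ 1 - p → p + q + r ∈ P

/-- A function `p : S → ℝ` is varying if it is neither everywhere `≤ 1/2`
nor everywhere `≥ 1/2`. -/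
def Varying (S : Type*) (p : S → ℝ) : Prop :=
  ¬(∀ s, p s ≤ 1 / 2) ∧ ¬(∀ s, 1 / 2 ≤ p s)

/-- `m` is the infimum of `p` and `q` within the poset `(P, ≤)`. -/
def IsInfIn (S : Type*) (P : Set (S → ℝ)) (p q m : S → ℝ) : Prop :=
  m ∈ P ∧ m ≤ p ∧ m ≤ q ∧ ∀ u ∈ P, u ≤ p → u ≤ q → u ≤ m

/-- `j` is the supremum of `p` and `q` within the poset `(P, ≤)`. -/
def IsSupIn (S : Type*) (P : Set (S → ℝ)) (p q j : S → ℝ) : Prop :=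
  j ∈ P ∧ p ≤ j ∧ q ≤ j ∧ ∀ u ∈ P, p ≤ u → q ≤ u → j ≤ u

/-- A Boolean algebra of `S`-probabilities: an algebra of `S`-probabilities in which any two
elements have an infimum and a supremum within `(P, ≤)`, the resulting lattice is distributive,
and for every `p ∈ P` the infimum of `p` and `1 - p` is `0` and their supremum is `1`. -/
def IsBooleanAlg (S : Type*) (P : Set (S → ℝ)) : Prop :=
  IsAlg S P ∧
  (∀ p ∈ P, ∀ q ∈ P, (∃ m, IsInfIn S P p q m) ∧ (∃ j, IsSupIn S P p q j)) ∧
  (∀ p ∈ P, ∀ q ∈ P, ∀ r ∈ P, ∀ qr a pq pr b : S → ℝ,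
    IsSupIn S P q r qr → IsInfIn S P p qr a →
    IsInfIn S P p q pq → IsInfIn S P p r pr → IsSupIn S P pq pr b → a = b) ∧
  ∀ p ∈ P, IsInfIn S P p (1 - p) 0 ∧ IsSupIn S P p (1 - p) 1

/-- The extension `(p, c)` of `p : S → ℝ` to `S̄ = S ∪ {s̄}` (modelled as `Option S`,
with `none` playing the role of the new state `s̄`), taking the value `c` at `s̄`. -/
def extFun {S : Type*} (p : S → ℝ) (c : ℝ) : Option S → ℝ :=
  fun x => Option.elim x c p

/-- The `0,1`-extension `P̄ = {(p,0) : p ∈ P} ∪ {(p,1) : p ∈ P}` of a set `P` of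
`S`-probabilities. -/
def extSet {S : Type*} (P : Set (S → ℝ)) : Set (Option S → ℝ) :=
  {f | ∃ p ∈ P, f = extFun p 0 ∨ f = extFun p 1}

/-- `p` and `q` are partially reciprocal below `1/2`. -/
def PRBelow (S : Type*) (p q : S → ℝ) : Prop := ∀ s, min (p s) (q s) ≤ 1 / 2

/-- `p` and `q` are partially reciprocal above `1/2`. -/
def PRAbove (S : Type*) (p q : S → ℝ) : Prop := ∀ s, 1 / 2 ≤ max (p s) (q s)

/-- `p` and `q` are reciprocal. -/
def Reciprocal (S : Type*) (p q : S → ℝ) : Prop := PRBelow S p q ∧ PRAbove S p q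

/-- Two functions are incomparable in the pointwise order. -/
def Incomp {S : Type*} (a b : S → ℝ) : Prop := ¬a ≤ b ∧ ¬b ≤ a

/-- An algebra of `S`-probabilities of type `MO₂`,
with the six pairwise distinct elements `0, p₁, 1 - p₁, p₂, 1 - p₂, 1` such that
`p₁, 1 - p₁, p₂, 1 - p₂` are pairwise incomparable. -/
def IsMO2 (S : Type*) (P : Set (S → ℝ)) (p1 p2 : S → ℝ) : Prop :=
  IsAlg S P ∧
  P = {0, p1, 1 - p1, p2, 1 - p2, 1} ∧
  ([(0 : S → ℝ), p1, 1 - p1, p2, 1 - p2, 1].Pairwise (· ≠ ·)) ∧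
  Incomp p1 (1 - p1) ∧ Incomp p1 p2 ∧ Incomp p1 (1 - p2) ∧
  Incomp (1 - p1) p2 ∧ Incomp (1 - p1) (1 - p2) ∧ Incomp p2 (1 - p2)

/-- `f` is an atom of `P`: a minimal element of `P \ {0}`. -/
def IsAtomOf (S : Type*) (P : Set (S → ℝ)) (f : S → ℝ) : Prop :=
  f ∈ P ∧ f ≠ 0 ∧ ∀ g ∈ P, g ≠ 0 → g ≤ f → g = f
theorem stmt_0 {S : Type*} [Nonempty S] {P : Set (S → ℝ)} (hP : IsAlg S P)
    {p : S → ℝ} (hp : p ∈ P) :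
    ((∀ s, p s ≤ 1 / 2) → p = 0) ∧ ((∀ s, 1 / 2 ≤ p s) → p = 1) ∧
    (p ≠ 0 → p ≠ 1 → Varying S p) := by
  
  obtain ⟨hprob, h0, hcompl, hsum⟩ := hP
  have main : ∀ q ∈ P, (∀ s, q s ≤ 1 / 2) → q = 0 := by
    intro q hq hhalf
    have key : ∀ n : ℕ, (fun s => (n : ℝ) * q s) ∈ P := by
      intro n
      induction n using Nat.strong_induction_on with
      | _ n ih =>
        match n with
        | 0 => convert h0 using 1; funext s; simp
        | 1 => simpa using hq
        | (m + 2) =>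
          have h1 := ih (m + 1) (by omega)
          have h0m := ih m (by omega)
          have hqnn : ∀ s, 0 ≤ q s := fun s => (hprob q hq s).1
          have hqle1 : ∀ s, ((m : ℝ) + 1) * q s ≤ 1 := by
            intro s
            have := (hprob _ h1 s).2
            push_cast at this
            linarith
          have o1 : q ≤ 1 - q := by
            intro s
            have := hhalf s
            simp only [Pi.sub_apply, Pi.one_apply]
            linarith
          have o2 : q ≤ 1 - (fun s => (m : ℝ) * q s) := by
            intro s
            have := hqle1 s
            simp only [Pi.sub_apply, Pi.one_apply]
            nlinarith [hqnn s]
          have o3 : (fun s => (m : ℝ) * q s) ≤ 1 - q := by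
            intro s
            have := hqle1 s
            simp only [Pi.sub_apply, Pi.one_apply]
            nlinarith [hqnn s]
          have hmem := hsum q q (fun s => (m : ℝ) * q s) hq hq h0m o1 o2 o3
          convert hmem using 1
          funext s
          simp only [Pi.add_apply]
          push_cast
          ring
    funext s
    have hnn := (hprob q hq s).1
    by_contra hne
    have hpos : 0 < q s := lt_of_le_of_ne hnn (by simpa [eq_comm] using hne)
    obtain ⟨n, hn⟩ := exists_nat_gt (1 / q s)
    have hle := (hprob _ (key n) s).2
    have : (1 : ℝ) < n * q s := (div_lt_iff₀ hpos).mp hn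
    linarith
  have part1 : (∀ s, p s ≤ 1 / 2) → p = 0 := fun h => main p hp h
  have part2 : (∀ s, 1 / 2 ≤ p s) → p = 1 := by
    intro h
    have hmem := hcompl p hp
    have := main (1 - p) hmem (by
      intro s
      have := h s
      simp only [Pi.sub_apply, Pi.one_apply]
      linarith)
    have : p = 1 := by
      funext s
      have := congrFun this s
      simp only [Pi.sub_apply, Pi.one_apply, Pi.zero_apply] at this
      simp only [Pi.one_apply]
      linarith
    exact this
  refine ⟨part1, part2, fun h0' h1' => ⟨fun h => h0' (part1 h), fun h => h1' (part2 h)⟩⟩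
end

section
/- Let P be an algebra of S-probabilities and let p, q ∈ P with p ≤ 1 − q. Then p + q ∈ P and p + q is the least upper bound of p and q within the poset (P, ≤): p ≤ p + q, q ≤ p + q, and every u ∈ P with p ≤ u and q ≤ u satisfies p + q ≤ u. -/
theorem stmt_1 {S : Type*} [Nonempty S] {P : Set (S → ℝ)} (hP : IsAlg S P)
    {p q : S → ℝ} (hp : p ∈ P) (hq : q ∈ P) (hpq : p ≤ 1 - q) :
    p + q ∈ P ∧ p ≤ p + q ∧ q ≤ p + q ∧ ∀ u ∈ P, p ≤ u → q ≤ u → p + q ≤ u := by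
  obtain ⟨hprob, h0, hcompl, hsum⟩ := hP
  have hp1 := hprob p hp
  have hq1 := hprob q hq
  have horth0 : ∀ f : S → ℝ, f ∈ P → (0 : S → ℝ) ≤ 1 - f := by
    intro f hf s
    have := hprob f hf s
    simp only [Pi.sub_apply, Pi.one_apply, Pi.zero_apply]
    linarith [this.2]
  have horth0' : ∀ f : S → ℝ, f ∈ P → f ≤ 1 - (0 : S → ℝ) := by
    intro f hf s
    have := hprob f hf s
    simp only [Pi.sub_apply, Pi.one_apply, Pi.zero_apply]
    linarith [this.2]
  have hmem : p + q ∈ P := by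
    have := hsum p q 0 hp hq h0 hpq (horth0' q hq) (horth0 p hp)
    simpa using this
  refine ⟨hmem, ?_, ?_, ?_⟩
  · intro s; simp only [Pi.add_apply]; linarith [(hq1 s).1]
  · intro s; simp only [Pi.add_apply]; linarith [(hp1 s).1]
  · intro u hu hpu hqu
    have h1u : 1 - u ∈ P := hcompl u hu
    have hmem2 : p + q + (1 - u) ∈ P := by
      apply hsum p q (1 - u) hp hq h1u hpq
      · intro s
        have := hqu s
        simp only [Pi.sub_apply, Pi.one_apply] at *
        linarith
      · intro s
        have := hpu s
        simp only [Pi.sub_apply, Pi.one_apply] at *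
        linarith
    intro s
    have := (hprob _ hmem2 s).2
    simp only [Pi.add_apply, Pi.sub_apply, Pi.one_apply] at *
    linarith
end

section
/- Let P be an algebra of S-probabilities, p ∈ P, and let q be an S-probability such that either (p(s) − 1/2 ≤ q(s) ≤ p(s) for all s ∈ S and q ≠ p) or (p(s) ≤ q(s) ≤ p(s) + 1/2 for all s ∈ S and q ≠ p). Then q is destructive: there exists no algebra Q of S-probabilities with P ∪ {q} ⊆ Q. -/
theorem stmt_2 {S : Type*} [Nonempty S] {P : Set (S → ℝ)} (hP : IsAlg S P)
    {p : S → ℝ} (hp : p ∈ P) {q : S → ℝ} (hq : IsProb S q)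
    (h : ((∀ s, p s - 1 / 2 ≤ q s ∧ q s ≤ p s) ∧ q ≠ p) ∨
         ((∀ s, p s ≤ q s ∧ q s ≤ p s + 1 / 2) ∧ q ≠ p)) :
    ¬∃ Q : Set (S → ℝ), IsAlg S Q ∧ P ∪ {q} ⊆ Q := by
  rintro ⟨Q, ⟨hprob, h0, hcompl, hsum⟩, hPQ⟩
  have hqQ : q ∈ Q := hPQ (Or.inr rfl)
  have hpQ : p ∈ Q := hPQ (Or.inl hp)
  -- difference lemma: a, b ∈ Q, b ≤ a implies a - b ∈ Q
  have hdiff : ∀ a ∈ Q, ∀ b ∈ Q, b ≤ a → a - b ∈ Q := by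
    intro a ha b hb hba
    have h1a : (1:S→ℝ) - a ∈ Q := hcompl a ha
    have hs : b + ((1:S→ℝ) - a) + 0 ∈ Q := by
      refine hsum b (1 - a) 0 hb h1a h0 ?_ ?_ ?_
      · intro s; have := hba s; simp [Pi.sub_apply]; linarith
      · intro s; have := (hprob a ha s).1; simp [Pi.sub_apply]; linarith
      · intro s; have := (hprob b hb s).2; simp [Pi.sub_apply]; linarith
    have := hcompl _ hs
    convert this using 1
    ext s; simp [Pi.sub_apply]; ring
  -- extract d ∈ Q with 0 ≤ d ≤ 1/2, d ≠ 0
  obtain ⟨d, hdQ, hd0, hdh, hdne⟩ :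
      ∃ d, d ∈ Q ∧ (∀ s, 0 ≤ d s) ∧ (∀ s, d s ≤ 1/2) ∧ d ≠ 0 := by
    rcases h with ⟨hb, hne⟩ | ⟨hb, hne⟩
    · refine ⟨p - q, hdiff p hpQ q hqQ (fun s => (hb s).2), ?_, ?_, ?_⟩
      · intro s; have := (hb s).2; simp [Pi.sub_apply]; linarith
      · intro s; have := (hb s).1; simp [Pi.sub_apply]; linarith
      · intro hc; apply hne; ext s
        have : p s - q s = 0 := congrFun hc s
        linarith
    · refine ⟨q - p, hdiff q hqQ p hpQ (fun s => (hb s).1), ?_, ?_, ?_⟩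
      · intro s; have := (hb s).1; simp [Pi.sub_apply]; linarith
      · intro s; have := (hb s).2; simp [Pi.sub_apply]; linarith
      · intro hc; apply hne; ext s
        have : q s - p s = 0 := congrFun hc s
        linarith
  have key : ∀ n : ℕ, (fun s => (n:ℝ) * d s) ∈ Q := by
    intro n
    induction n using Nat.strong_induction_on with
    | _ n ih =>
      match n with
      | 0 => convert h0 using 1; ext s; simp
      | 1 => simpa using hdQ
      | (n+2) =>
        have hn : (fun s => (n:ℝ) * d s) ∈ Q := ih n (by omega)
        have hn1 : (fun s => ((n+1:ℕ):ℝ) * d s) ∈ Q := ih (n+1) (by omega)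
        have hb1 := hprob _ hn1
        have hs : (fun s => (n:ℝ)*d s) + d + d ∈ Q := by
          refine hsum _ d d hn hdQ hdQ ?_ ?_ ?_
          · intro s
            have h1 := (hb1 s).2
            push_cast at h1
            simp [Pi.sub_apply]; linarith
          · intro s; have := hdh s; simp [Pi.sub_apply]; linarith
          · intro s
            have h1 := (hb1 s).2
            push_cast at h1
            simp [Pi.sub_apply]; linarith
        convert hs using 1
        ext s; simp [Pi.add_apply]; push_cast; ring
  obtain ⟨s0, hs0⟩ : ∃ s, d s ≠ 0 := by
    by_contra hc; push_neg at hc; exact hdne (funext hc)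
  have hpos : 0 < d s0 := lt_of_le_of_ne (hd0 s0) (Ne.symm hs0)
  obtain ⟨n, hn⟩ := exists_nat_gt (1 / d s0)
  have hle := (hprob _ (key n) s0).2
  have : (1:ℝ) < (n:ℝ) * d s0 := by
    rw [div_lt_iff₀ hpos] at hn; linarith
  linarith
end

section
/- Let P be a set of S-probabilities and let P̄ be its 0,1-extension on S̄. Then P is an algebra of S-probabilities if and only if P̄ is an algebra of S̄-probabilities. -/
lemma extFun_none {S : Type*} (p : S → ℝ) (c : ℝ) : extFun p c none = c := rfl

lemma extFun_some {S : Type*} (p : S → ℝ) (c : ℝ) (s : S) : extFun p c (some s) = p s := rfl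

lemma one_sub_extFun {S : Type*} (p : S → ℝ) (c : ℝ) :
    (1 : Option S → ℝ) - extFun p c = extFun (1 - p) (1 - c) := by
  funext x; cases x <;> rfl

lemma add_extFun {S : Type*} (p q : S → ℝ) (c d : ℝ) :
    extFun p c + extFun q d = extFun (p + q) (c + d) := by
  funext x; cases x <;> rfl

lemma zero_extFun {S : Type*} : (0 : Option S → ℝ) = extFun 0 0 := by
  funext x; cases x <;> rfl

lemma extFun_le {S : Type*} {p q : S → ℝ} {c d : ℝ} :
    extFun p c ≤ extFun q d ↔ p ≤ q ∧ c ≤ d := by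
  constructor
  · exact fun h => ⟨fun s => h (some s), h none⟩
  · rintro ⟨h1, h2⟩ x; cases x
    · exact h2
    · exact h1 _

lemma extFun_inj {S : Type*} {p q : S → ℝ} {c d : ℝ} (h : extFun p c = extFun q d) :
    p = q ∧ c = d :=
  ⟨funext fun s => congrFun h (some s), congrFun h none⟩

theorem stmt_3 {S : Type*} [Nonempty S] {P : Set (S → ℝ)}
    (hP : ∀ p ∈ P, IsProb S p) :
    IsAlg S P ↔ IsAlg (Option S) (extSet P) := by
  constructor
  · rintro ⟨_, h0, hc, hsum⟩
    refine ⟨?_, ?_, ?_, ?_⟩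
    · rintro f ⟨p, hp, hf | hf⟩ <;> subst hf <;> intro x <;> cases x
      · norm_num [extFun_none]
      · exact (hP p hp) _
      · norm_num [extFun_none]
      · exact (hP p hp) _
    · exact ⟨0, h0, Or.inl zero_extFun⟩
    · rintro f ⟨p, hp, hf | hf⟩ <;> subst hf
      · exact ⟨1 - p, hc p hp, Or.inr (one_sub_extFun p 0 ▸ by norm_num)⟩
      · exact ⟨1 - p, hc p hp, Or.inl (one_sub_extFun p 1 ▸ by norm_num)⟩
    · rintro f g h ⟨p, hp, hf | hf⟩ ⟨q, hq, hg | hg⟩ ⟨r, hr, hh | hh⟩ hfg hgh hhf <;>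
        subst hf <;> subst hg <;> subst hh <;>
        rw [one_sub_extFun, extFun_le] at hfg hgh hhf
      · exact ⟨p + q + r, hsum p q r hp hq hr hfg.1 hgh.1 hhf.1,
          Or.inl (by rw [add_extFun, add_extFun]; norm_num)⟩
      · exact ⟨p + q + r, hsum p q r hp hq hr hfg.1 hgh.1 hhf.1,
          Or.inr (by rw [add_extFun, add_extFun]; norm_num)⟩
      · exact ⟨p + q + r, hsum p q r hp hq hr hfg.1 hgh.1 hhf.1,
          Or.inr (by rw [add_extFun, add_extFun]; norm_num)⟩
      · exact absurd hgh.2 (by norm_num)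
      · exact ⟨p + q + r, hsum p q r hp hq hr hfg.1 hgh.1 hhf.1,
          Or.inr (by rw [add_extFun, add_extFun]; norm_num)⟩
      · exact absurd hhf.2 (by norm_num)
      · exact absurd hfg.2 (by norm_num)
      · exact absurd hfg.2 (by norm_num)
  · rintro ⟨_, h0, hc, hsum⟩
    refine ⟨hP, ?_, ?_, ?_⟩
    · obtain ⟨p, hp, hf | hf⟩ := h0 <;> rw [zero_extFun] at hf
      · obtain ⟨h1, _⟩ := extFun_inj hf.symm
        exact h1 ▸ hp
      · exact absurd (extFun_inj hf.symm).2 (by norm_num)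
    · intro p hp
      obtain ⟨q, hq, hf | hf⟩ := hc (extFun p 0) ⟨p, hp, Or.inl rfl⟩ <;>
        rw [one_sub_extFun] at hf <;> obtain ⟨h1, h2⟩ := extFun_inj hf
      · exact absurd h2 (by norm_num)
      · exact h1 ▸ hq
    · intro p q r hp hq hr hpq hqr hrp
      have key := hsum (extFun p 0) (extFun q 0) (extFun r 0)
        ⟨p, hp, Or.inl rfl⟩ ⟨q, hq, Or.inl rfl⟩ ⟨r, hr, Or.inl rfl⟩
        (by rw [one_sub_extFun, extFun_le]; exact ⟨hpq, by norm_num⟩)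
        (by rw [one_sub_extFun, extFun_le]; exact ⟨hqr, by norm_num⟩)
        (by rw [one_sub_extFun, extFun_le]; exact ⟨hrp, by norm_num⟩)
      rw [add_extFun, add_extFun] at key
      obtain ⟨u, hu, hf | hf⟩ := key <;> obtain ⟨h1, h2⟩ := extFun_inj hf
      · exact h1 ▸ hu
      · exact absurd h2 (by norm_num)
end

section
/- Let P be an algebra of S-probabilities and let P̄ be its 0,1-extension on S̄ (which is then an algebra of S̄-probabilities). Then any two elements of P have an infimum and a supremum in the poset (P, ≤) if and only if any two elements of P̄ have an infimum and a supremum in (P̄, ≤); moreover, P is a Boolean algebra of S-probabilities if and only if P̄ is a Boolean algebra of S̄-probabilities. -/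
section Stmt4Aux

variable {S : Type*}

lemma le_ext {p q : S → ℝ} {c d : ℝ} :
    extFun p c ≤ extFun q d ↔ p ≤ q ∧ c ≤ d := by
  constructor
  · intro h; exact ⟨fun s => h (some s), h none⟩
  · rintro ⟨h1, h2⟩ x
    cases x with
    | none => exact h2
    | some s => exact h1 s

lemma mem_ext {P : Set (S → ℝ)} {f : Option S → ℝ} :
    f ∈ extSet P ↔ ∃ p ∈ P, ∃ c : ℝ, (c = 0 ∨ c = 1) ∧ f = extFun p c := by
  constructor
  · rintro ⟨p, hp, h | h⟩
    · exact ⟨p, hp, 0, Or.inl rfl, h⟩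
    · exact ⟨p, hp, 1, Or.inr rfl, h⟩
  · rintro ⟨p, hp, c, hc | hc, h⟩ <;> subst hc
    · exact ⟨p, hp, Or.inl h⟩
    · exact ⟨p, hp, Or.inr h⟩

lemma one_sub_ext (p : S → ℝ) (c : ℝ) : 1 - extFun p c = extFun (1 - p) (1 - c) := by
  funext x; cases x <;> rfl

lemma zero_ext : (0 : Option S → ℝ) = extFun 0 0 := by
  funext x; cases x <;> rfl

lemma one_ext : (1 : Option S → ℝ) = extFun 1 1 := by
  funext x; cases x <;> rfl

lemma add3_ext (p q r : S → ℝ) (a b c : ℝ) :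
    extFun p a + extFun q b + extFun r c = extFun (p + q + r) (a + b + c) := by
  funext x; cases x <;> rfl

lemma ext_inj {p q : S → ℝ} {c d : ℝ} (h : extFun p c = extFun q d) : p = q ∧ c = d := by
  constructor
  · funext s; exact congrFun h (some s)
  · exact congrFun h none

lemma infIn_unique {T : Type*} {P : Set (T → ℝ)} {p q m m' : T → ℝ}
    (h : IsInfIn T P p q m) (h' : IsInfIn T P p q m') : m = m' :=
  le_antisymm (h'.2.2.2 m h.1 h.2.1 h.2.2.1) (h.2.2.2 m' h'.1 h'.2.1 h'.2.2.1)

lemma supIn_unique {T : Type*} {P : Set (T → ℝ)} {p q j j' : T → ℝ}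
    (h : IsSupIn T P p q j) (h' : IsSupIn T P p q j') : j = j' :=
  le_antisymm (h.2.2.2 j' h'.1 h'.2.1 h'.2.2.1) (h'.2.2.2 j h.1 h.2.1 h.2.2.1)

lemma inf_ext {P : Set (S → ℝ)} {p q m : S → ℝ} {a b : ℝ}
    (ha : a = 0 ∨ a = 1) (hb : b = 0 ∨ b = 1) (hm : IsInfIn S P p q m) :
    IsInfIn (Option S) (extSet P) (extFun p a) (extFun q b) (extFun m (min a b)) := by
  obtain ⟨hmP, hmp, hmq, hmin⟩ := hm
  refine ⟨mem_ext.2 ⟨m, hmP, min a b, ?_, rfl⟩, le_ext.2 ⟨hmp, min_le_left _ _⟩,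
    le_ext.2 ⟨hmq, min_le_right _ _⟩, ?_⟩
  · rcases ha with ha | ha <;> rcases hb with hb | hb <;> subst ha <;> subst hb <;> simp
  · intro u hu h1 h2
    obtain ⟨v, hv, e, _, rfl⟩ := mem_ext.1 hu
    rw [le_ext] at h1 h2 ⊢
    exact ⟨hmin v hv h1.1 h2.1, le_min h1.2 h2.2⟩

lemma sup_ext {P : Set (S → ℝ)} {p q j : S → ℝ} {a b : ℝ}
    (ha : a = 0 ∨ a = 1) (hb : b = 0 ∨ b = 1) (hj : IsSupIn S P p q j) :
    IsSupIn (Option S) (extSet P) (extFun p a) (extFun q b) (extFun j (max a b)) := by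
  obtain ⟨hjP, hjp, hjq, hsup⟩ := hj
  refine ⟨mem_ext.2 ⟨j, hjP, max a b, ?_, rfl⟩, le_ext.2 ⟨hjp, le_max_left _ _⟩,
    le_ext.2 ⟨hjq, le_max_right _ _⟩, ?_⟩
  · rcases ha with ha | ha <;> rcases hb with hb | hb <;> subst ha <;> subst hb <;> simp
  · intro u hu h1 h2
    obtain ⟨v, hv, e, _, rfl⟩ := mem_ext.1 hu
    rw [le_ext] at h1 h2 ⊢
    exact ⟨hsup v hv h1.1 h2.1, max_le h1.2 h2.2⟩

lemma inf_unext {P : Set (S → ℝ)} {p q : S → ℝ} {a b : ℝ} {M : Option S → ℝ}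
    (ha : a = 0 ∨ a = 1) (hb : b = 0 ∨ b = 1)
    (hM : IsInfIn (Option S) (extSet P) (extFun p a) (extFun q b) M) :
    ∃ m, IsInfIn S P p q m ∧ M = extFun m (min a b) := by
  obtain ⟨hMmem, h1, h2, hmin⟩ := hM
  obtain ⟨m, hmP, c, hc, rfl⟩ := mem_ext.1 hMmem
  rw [le_ext] at h1 h2
  have hminf : IsInfIn S P p q m := by
    refine ⟨hmP, h1.1, h2.1, fun u hu hup huq => ?_⟩
    have := hmin (extFun u 0) (mem_ext.2 ⟨u, hu, 0, Or.inl rfl, rfl⟩)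
      (le_ext.2 ⟨hup, by rcases ha with h | h <;> simp [h]⟩)
      (le_ext.2 ⟨huq, by rcases hb with h | h <;> simp [h]⟩)
    exact (le_ext.1 this).1
  exact ⟨m, hminf, infIn_unique ⟨hMmem, le_ext.2 h1, le_ext.2 h2, hmin⟩ (inf_ext ha hb hminf)⟩

lemma sup_unext {P : Set (S → ℝ)} {p q : S → ℝ} {a b : ℝ} {J : Option S → ℝ}
    (ha : a = 0 ∨ a = 1) (hb : b = 0 ∨ b = 1)
    (hJ : IsSupIn (Option S) (extSet P) (extFun p a) (extFun q b) J) :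
    ∃ j, IsSupIn S P p q j ∧ J = extFun j (max a b) := by
  obtain ⟨hJmem, h1, h2, hsup⟩ := hJ
  obtain ⟨j, hjP, c, hc, rfl⟩ := mem_ext.1 hJmem
  rw [le_ext] at h1 h2
  have hjsup : IsSupIn S P p q j := by
    refine ⟨hjP, h1.1, h2.1, fun u hu hup huq => ?_⟩
    have := hsup (extFun u 1) (mem_ext.2 ⟨u, hu, 1, Or.inr rfl, rfl⟩)
      (le_ext.2 ⟨hup, by rcases ha with h | h <;> simp [h]⟩)
      (le_ext.2 ⟨huq, by rcases hb with h | h <;> simp [h]⟩)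
    exact (le_ext.1 this).1
  exact ⟨j, hjsup, supIn_unique ⟨hJmem, le_ext.2 h1, le_ext.2 h2, hsup⟩ (sup_ext ha hb hjsup)⟩

lemma alg_ext {P : Set (S → ℝ)} (hP : IsAlg S P) : IsAlg (Option S) (extSet P) := by
  obtain ⟨hprob, h0, hcompl, hsum⟩ := hP
  refine ⟨?_, ?_, ?_, ?_⟩
  · rintro f hf
    obtain ⟨p, hp, c, hc, rfl⟩ := mem_ext.1 hf
    intro x
    cases x with
    | none => rcases hc with h | h <;> simp [extFun, h]
    | some s => exact hprob p hp s
  · exact mem_ext.2 ⟨0, h0, 0, Or.inl rfl, zero_ext⟩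
  · rintro f hf
    obtain ⟨p, hp, c, hc, rfl⟩ := mem_ext.1 hf
    refine mem_ext.2 ⟨1 - p, hcompl p hp, 1 - c, ?_, one_sub_ext p c⟩
    rcases hc with h | h
    · right; rw [h]; ring
    · left; rw [h]; ring
  · rintro f g h hf hg hh hfg hgh hhf
    obtain ⟨p, hp, a, ha, rfl⟩ := mem_ext.1 hf
    obtain ⟨q, hq, b, hb, rfl⟩ := mem_ext.1 hg
    obtain ⟨r, hr, c, hc, rfl⟩ := mem_ext.1 hh
    rw [one_sub_ext, le_ext] at hfg hgh hhf
    rw [add3_ext]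
    refine mem_ext.2 ⟨p + q + r, hsum p q r hp hq hr hfg.1 hgh.1 hhf.1, a + b + c, ?_, rfl⟩
    have h1 := hfg.2; have h2 := hgh.2; have h3 := hhf.2
    rcases ha with h | h <;> rcases hb with h' | h' <;> rcases hc with h'' | h'' <;>
      subst h <;> subst h' <;> subst h'' <;> (revert h1 h2 h3; norm_num)

end Stmt4Aux

theorem stmt_4 {S : Type*} [Nonempty S] {P : Set (S → ℝ)} (hP : IsAlg S P) :
    ((∀ p ∈ P, ∀ q ∈ P, (∃ m, IsInfIn S P p q m) ∧ (∃ j, IsSupIn S P p q j)) ↔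
      (∀ p ∈ extSet P, ∀ q ∈ extSet P,
        (∃ m, IsInfIn (Option S) (extSet P) p q m) ∧
        (∃ j, IsSupIn (Option S) (extSet P) p q j))) ∧
    (IsBooleanAlg S P ↔ IsBooleanAlg (Option S) (extSet P)) := by
  have lat : (∀ p ∈ P, ∀ q ∈ P, (∃ m, IsInfIn S P p q m) ∧ (∃ j, IsSupIn S P p q j)) ↔
      (∀ p ∈ extSet P, ∀ q ∈ extSet P,
        (∃ m, IsInfIn (Option S) (extSet P) p q m) ∧
        (∃ j, IsSupIn (Option S) (extSet P) p q j)) := by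
    constructor
    · intro h f hf g hg
      obtain ⟨p, hp, a, ha, rfl⟩ := mem_ext.1 hf
      obtain ⟨q, hq, b, hb, rfl⟩ := mem_ext.1 hg
      obtain ⟨⟨m, hm⟩, ⟨j, hj⟩⟩ := h p hp q hq
      exact ⟨⟨_, inf_ext ha hb hm⟩, ⟨_, sup_ext ha hb hj⟩⟩
    · intro h p hp q hq
      obtain ⟨⟨M, hM⟩, ⟨J, hJ⟩⟩ := h (extFun p 0) (mem_ext.2 ⟨p, hp, 0, Or.inl rfl, rfl⟩)
        (extFun q 0) (mem_ext.2 ⟨q, hq, 0, Or.inl rfl, rfl⟩)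
      obtain ⟨m, hm, -⟩ := inf_unext (Or.inl rfl) (Or.inl rfl) hM
      obtain ⟨j, hj, -⟩ := sup_unext (Or.inl rfl) (Or.inl rfl) hJ
      exact ⟨⟨m, hm⟩, ⟨j, hj⟩⟩
  refine ⟨lat, ?_⟩
  constructor
  · rintro ⟨halg, hlat, hdist, hcompl⟩
    refine ⟨alg_ext hP, lat.1 hlat, ?_, ?_⟩
    · intro f hf g hg h hh qr a pq pr b hqr ha' hpq hpr hb'
      obtain ⟨p, hp, e1, he1, rfl⟩ := mem_ext.1 hf
      obtain ⟨q, hq, e2, he2, rfl⟩ := mem_ext.1 hg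
      obtain ⟨r, hr, e3, he3, rfl⟩ := mem_ext.1 hh
      have he23 : max e2 e3 = 0 ∨ max e2 e3 = 1 := by
        rcases he2 with h' | h' <;> rcases he3 with h'' | h'' <;> rw [h', h''] <;> simp
      obtain ⟨QR, hQR, rfl⟩ := sup_unext he2 he3 hqr
      obtain ⟨A, hA, rfl⟩ := inf_unext he1 he23 ha'
      obtain ⟨PQ, hPQ, rfl⟩ := inf_unext he1 he2 hpq
      have he12 : min e1 e2 = 0 ∨ min e1 e2 = 1 := by
        rcases he1 with h' | h' <;> rcases he2 with h'' | h'' <;> rw [h', h''] <;> simp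
      have he13 : min e1 e3 = 0 ∨ min e1 e3 = 1 := by
        rcases he1 with h' | h' <;> rcases he3 with h'' | h'' <;> rw [h', h''] <;> simp
      obtain ⟨PR, hPR, rfl⟩ := inf_unext he1 he3 hpr
      obtain ⟨B, hB, rfl⟩ := sup_unext he12 he13 hb'
      have hAB : A = B := hdist p hp q hq r hr QR A PQ PR B hQR hA hPQ hPR hB
      rw [hAB, min_max_distrib_left]
    · intro f hf
      obtain ⟨p, hp, e, he, rfl⟩ := mem_ext.1 hf
      obtain ⟨hinf, hsup⟩ := hcompl p hp
      have h1e : (1 - e : ℝ) = 0 ∨ (1 - e : ℝ) = 1 := by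
        rcases he with h | h <;> rw [h] <;> norm_num
      have hmin : min e (1 - e) = 0 := by rcases he with h | h <;> rw [h] <;> norm_num
      have hmax : max e (1 - e) = 1 := by rcases he with h | h <;> rw [h] <;> norm_num
      constructor
      · have h' := inf_ext (P := P) he h1e hinf
        rw [hmin] at h'
        rw [one_sub_ext, zero_ext]
        exact h'
      · have h' := sup_ext (P := P) he h1e hsup
        rw [hmax] at h'
        rw [one_sub_ext, one_ext]
        exact h'
  · rintro ⟨-, hlat, hdist, hcompl⟩
    refine ⟨hP, lat.2 hlat, ?_, ?_⟩
    · intro p hp q hq r hr qr a pq pr b hqr ha' hpq hpr hb'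
      have e0 : ∀ f : S → ℝ, f ∈ P → extFun f 0 ∈ extSet P :=
        fun f hf => mem_ext.2 ⟨f, hf, 0, Or.inl rfl, rfl⟩
      have H := hdist (extFun p 0) (e0 p hp) (extFun q 0) (e0 q hq) (extFun r 0) (e0 r hr)
        (extFun qr (max 0 0)) (extFun a (min 0 (max 0 0)))
        (extFun pq (min 0 0)) (extFun pr (min 0 0))
        (extFun b (max (min 0 0) (min 0 0)))
        (sup_ext (Or.inl rfl) (Or.inl rfl) hqr)
        (inf_ext (Or.inl rfl) (by simp) ha')
        (inf_ext (Or.inl rfl) (Or.inl rfl) hpq)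
        (inf_ext (Or.inl rfl) (Or.inl rfl) hpr)
        (sup_ext (by simp) (by simp) hb')
      exact (ext_inj H).1
    · intro p hp
      have hmem : extFun p 0 ∈ extSet P := mem_ext.2 ⟨p, hp, 0, Or.inl rfl, rfl⟩
      obtain ⟨hinf, hsup⟩ := hcompl (extFun p 0) hmem
      rw [one_sub_ext] at hinf hsup
      norm_num at hinf hsup
      rw [zero_ext] at hinf
      rw [one_ext] at hsup
      obtain ⟨m, hm, hm'⟩ := inf_unext (Or.inl rfl) (Or.inr rfl) hinf
      obtain ⟨j, hj, hj'⟩ := sup_unext (Or.inl rfl) (Or.inr rfl) hsup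
      norm_num at hm' hj'
      constructor
      · rwa [← (ext_inj hm').1] at hm
      · rwa [← (ext_inj hj').1] at hj
end

section
/- Let P be an algebra of S-probabilities whose 0,1-extension P̄ is a Boolean algebra of S̄-probabilities. Let q be a varying S-probability that is not comparable to any element of P ∖ {0, 1} (i.e., for every p ∈ P with p ≠ 0 and p ≠ 1, neither q ≤ p nor p ≤ q), let c ∈ ℝ with 0 < c < 1, and set q̄ := (q, c). Assume there exists p ∈ P with p ≠ 0 and p ≠ 1 such that either min(p(s), q(s)) ≤ 1/2 for all s ∈ S or max(p(s), q(s)) ≥ 1/2 for all s ∈ S. Then (1) there exists an algebra Q of S̄-probabilities with P̄ ∪ {q̄} ⊆ Q (namely Q = P̄ ∪ {q̄, (1−q, 1−c)}), but (2) there exists no Boolean algebra Q of S̄-probabilities with P̄ ∪ {q̄} ⊆ Q. -/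
lemma osymm {T : Type*} {a b : T → ℝ} (h : a ≤ 1 - b) : b ≤ 1 - a := by
  intro x
  have hx := h x
  simp only [Pi.sub_apply, Pi.one_apply] at hx ⊢
  linarith

lemma half_eq_zero {T : Type*} {Q : Set (T → ℝ)} (hQ : IsAlg T Q) {a : T → ℝ}
    (ha : a ∈ Q) (hhalf : ∀ x, a x ≤ 1 / 2) : a = 0 := by
  obtain ⟨hprob, h0, hcompl, hsum⟩ := hQ
  have h1a : (1 : T → ℝ) - a ∈ Q := hcompl a ha
  have hmem : a + a + (1 - a) ∈ Q := by
    apply hsum a a (1 - a) ha ha h1a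
    · intro x; simp only [Pi.sub_apply, Pi.one_apply]; linarith [hhalf x]
    · intro x; simp only [Pi.sub_apply, Pi.one_apply]; linarith
    · exact le_refl _
  funext x
  have h1 := (hprob _ hmem x).2
  have h2 := (hprob a ha x).1
  simp only [Pi.add_apply, Pi.sub_apply, Pi.one_apply] at h1
  simp only [Pi.zero_apply]
  linarith

lemma inf_zero_orth {T : Type*} {Q : Set (T → ℝ)} (hQ : IsBooleanAlg T Q)
    {a b : T → ℝ} (ha : a ∈ Q) (hb : b ∈ Q)
    (h0 : IsInfIn T Q a b 0) : a ≤ 1 - b := by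
  obtain ⟨hAlg, hlat, hdist, hcomp⟩ := hQ
  have hb' : (1 : T → ℝ) - b ∈ Q := hAlg.2.2.1 b hb
  obtain ⟨x, hx⟩ := (hlat a ha (1 - b) hb').1
  have hsupb : IsSupIn T Q b (1 - b) 1 := (hcomp b hb).2
  have hinfa1 : IsInfIn T Q a 1 a :=
    ⟨ha, le_refl a, fun t => (hAlg.1 a ha t).2, fun u _ h _ => h⟩
  have hsup0x : IsSupIn T Q 0 x x :=
    ⟨hx.1, fun t => (hAlg.1 x hx.1 t).1, le_refl x, fun u _ _ h => h⟩
  have heq := hdist a ha b hb (1 - b) hb' 1 a 0 x x hsupb hinfa1 h0 hx hsup0x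
  rw [heq]
  exact hx.2.2.1

lemma extFun_zero {S : Type*} : extFun (0 : S → ℝ) 0 = (0 : Option S → ℝ) := by
  funext x; cases x <;> rfl

theorem stmt_5 {S : Type*} [Nonempty S] {P : Set (S → ℝ)} (hP : IsAlg S P)
    (hPbar : IsBooleanAlg (Option S) (extSet P))
    {q : S → ℝ} (hq : IsProb S q) (hqv : Varying S q)
    (hnc : ∀ p ∈ P, p ≠ 0 → p ≠ 1 → ¬q ≤ p ∧ ¬p ≤ q)
    {c : ℝ} (hc0 : 0 < c) (hc1 : c < 1)
    (hex : ∃ p ∈ P, p ≠ 0 ∧ p ≠ 1 ∧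
      ((∀ s, min (p s) (q s) ≤ 1 / 2) ∨ (∀ s, 1 / 2 ≤ max (p s) (q s)))) :
    IsAlg (Option S) (extSet P ∪ {extFun q c, extFun (1 - q) (1 - c)}) ∧
    ¬∃ Q : Set (Option S → ℝ), IsBooleanAlg (Option S) Q ∧ extSet P ∪ {extFun q c} ⊆ Q := by
  have h1P : (1 : S → ℝ) ∈ P := by
    have := hP.2.2.1 0 hP.2.1
    simpa using this
  have memA : extFun q c ∈ extSet P ∪ {extFun q c, extFun (1 - q) (1 - c)} :=
    Set.mem_union_right _ (Set.mem_insert _ _)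
  have memB : extFun (1 - q) (1 - c) ∈ extSet P ∪ {extFun q c, extFun (1 - q) (1 - c)} :=
    Set.mem_union_right _ (Set.mem_insert_of_mem _ rfl)
  have classify : ∀ f ∈ extSet P ∪ {extFun q c, extFun (1 - q) (1 - c)},
      f ∈ extSet P ∨ f = extFun q c ∨ f = extFun (1 - q) (1 - c) := by
    intro f hf
    rcases hf with hf | hf
    · exact Or.inl hf
    · rcases hf with hf | hf
      · exact Or.inr (Or.inl hf)
      · exact Or.inr (Or.inr hf)
  have orthE : ∀ (p1 p2 : S → ℝ) (e1 e2 : ℝ), extFun p1 e1 ≤ 1 - extFun p2 e2 →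
      (∀ s, p1 s ≤ 1 - p2 s) ∧ e1 ≤ 1 - e2 := by
    intro p1 p2 e1 e2 h
    constructor
    · intro s
      have := h (some s)
      simpa [extFun] using this
    · have := h none
      simpa [extFun] using this
  have hA0 : ∀ f ∈ extSet P, f ≤ 1 - extFun q c → f = 0 := by
    rintro f ⟨p, hp, rfl | rfl⟩ h
    · obtain ⟨hS, -⟩ := orthE p q 0 c h
      by_cases hp1 : p = 1
      · exfalso
        apply hqv.1
        intro s
        have := hS s
        rw [hp1] at this
        simp only [Pi.one_apply] at this
        linarith
      · by_cases hp0 : p = 0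
        · subst hp0; exact extFun_zero
        · exfalso
          refine (hnc (1 - p) (hP.2.2.1 p hp) ?_ ?_).1 ?_
          · intro hcon; exact hp1 (sub_eq_zero.mp hcon).symm
          · intro hcon; exact hp0 (by simpa using sub_eq_self.mp hcon)
          · intro s
            simp only [Pi.sub_apply, Pi.one_apply]
            linarith [hS s]
    · obtain ⟨-, hN⟩ := orthE p q 1 c h
      exfalso; linarith
  have hB0 : ∀ f ∈ extSet P, f ≤ 1 - extFun (1 - q) (1 - c) → f = 0 := by
    rintro f ⟨p, hp, rfl | rfl⟩ h
    · obtain ⟨hS, -⟩ := orthE p (1 - q) 0 (1 - c) h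
      have hpq : ∀ s, p s ≤ q s := by
        intro s
        have := hS s
        simp only [Pi.sub_apply, Pi.one_apply] at this
        linarith
      by_cases hp1 : p = 1
      · exfalso
        apply hqv.2
        intro s
        have := hpq s
        rw [hp1] at this
        simp only [Pi.one_apply] at this
        linarith
      · by_cases hp0 : p = 0
        · subst hp0; exact extFun_zero
        · exact absurd hpq ((hnc p hp hp0 hp1).2)
    · obtain ⟨-, hN⟩ := orthE p (1 - q) 1 (1 - c) h
      exfalso
      linarith
  have hAA : (extFun q c ≤ 1 - extFun q c) → False := by
    intro h
    apply hqv.1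
    intro s
    have := (orthE q q c c h).1 s
    linarith
  have hBB : (extFun (1 - q) (1 - c) ≤ 1 - extFun (1 - q) (1 - c)) → False := by
    intro h
    apply hqv.2
    intro s
    have := (orthE (1 - q) (1 - q) (1 - c) (1 - c) h).1 s
    simp only [Pi.sub_apply, Pi.one_apply] at this
    linarith
  have hABsum : extFun q c + extFun (1 - q) (1 - c) = extFun (1 : S → ℝ) 1 := by
    funext x
    cases x <;> simp [extFun] <;> ring
  have hone : extFun (1 : S → ℝ) 1 ∈ extSet P := ⟨1, h1P, Or.inr rfl⟩
  have hzero : (0 : Option S → ℝ) ∈ extSet P := ⟨0, hP.2.1, Or.inl extFun_zero.symm⟩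
  have sumPPP : ∀ f g h : Option S → ℝ, f ∈ extSet P → g ∈ extSet P → h ∈ extSet P →
      f ≤ 1 - g → g ≤ 1 - h → h ≤ 1 - f → f + g + h ∈ extSet P := by
    intro f g h hf hg hh h1 h2 h3
    obtain ⟨p1, hp1, e1⟩ := hf
    obtain ⟨p2, hp2, e2⟩ := hg
    obtain ⟨p3, hp3, e3⟩ := hh
    obtain ⟨ε1, hε1, rfl⟩ : ∃ e, (e = 0 ∨ e = 1) ∧ f = extFun p1 e := by
      rcases e1 with rfl | rfl
      exacts [⟨0, Or.inl rfl, rfl⟩, ⟨1, Or.inr rfl, rfl⟩]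
    obtain ⟨ε2, hε2, rfl⟩ : ∃ e, (e = 0 ∨ e = 1) ∧ g = extFun p2 e := by
      rcases e2 with rfl | rfl
      exacts [⟨0, Or.inl rfl, rfl⟩, ⟨1, Or.inr rfl, rfl⟩]
    obtain ⟨ε3, hε3, rfl⟩ : ∃ e, (e = 0 ∨ e = 1) ∧ h = extFun p3 e := by
      rcases e3 with rfl | rfl
      exacts [⟨0, Or.inl rfl, rfl⟩, ⟨1, Or.inr rfl, rfl⟩]
    obtain ⟨hS12, hE12⟩ := orthE p1 p2 ε1 ε2 h1
    obtain ⟨hS23, hE23⟩ := orthE p2 p3 ε2 ε3 h2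
    obtain ⟨hS31, hE31⟩ := orthE p3 p1 ε3 ε1 h3
    have hsum : p1 + p2 + p3 ∈ P := by
      apply hP.2.2.2 p1 p2 p3 hp1 hp2 hp3
      · intro s; simp only [Pi.sub_apply, Pi.one_apply]; linarith [hS12 s]
      · intro s; simp only [Pi.sub_apply, Pi.one_apply]; linarith [hS23 s]
      · intro s; simp only [Pi.sub_apply, Pi.one_apply]; linarith [hS31 s]
    have heq : extFun p1 ε1 + extFun p2 ε2 + extFun p3 ε3
        = extFun (p1 + p2 + p3) (ε1 + ε2 + ε3) := by
      funext x
      cases x <;> simp [extFun, Pi.add_apply]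
    have hkey : ε1 + ε2 + ε3 = 0 ∨ ε1 + ε2 + ε3 = 1 := by
      rcases hε1 with rfl | rfl <;> rcases hε2 with rfl | rfl <;> rcases hε3 with rfl | rfl
      · left; norm_num
      · right; norm_num
      · right; norm_num
      · exfalso; linarith
      · right; norm_num
      · exfalso; linarith
      · exfalso; linarith
      · exfalso; linarith
    rw [heq]
    refine ⟨p1 + p2 + p3, hsum, ?_⟩
    rcases hkey with hk | hk
    · left; rw [hk]
    · right; rw [hk]
  constructor
  · refine ⟨?_, ?_, ?_, ?_⟩
    · -- all probabilities
      intro f hf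
      rcases classify f hf with ⟨p, hp, rfl | rfl⟩ | rfl | rfl
      · intro x
        cases x with
        | none => exact ⟨le_refl 0, zero_le_one⟩
        | some s => exact hP.1 p hp s
      · intro x
        cases x with
        | none => exact ⟨zero_le_one, le_refl 1⟩
        | some s => exact hP.1 p hp s
      · intro x
        cases x with
        | none => exact ⟨hc0.le, hc1.le⟩
        | some s => exact hq s
      · intro x
        cases x with
        | none => refine ⟨?_, ?_⟩ <;> simp only [extFun, Option.elim] <;> linarith
        | some s =>
          have := hq s
          constructor <;> simp only [extFun, Option.elim, Pi.sub_apply, Pi.one_apply] <;> linarith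
    · exact Set.mem_union_left _ hzero
    · -- complements
      intro f hf
      rcases classify f hf with ⟨p, hp, rfl | rfl⟩ | rfl | rfl
      · rw [one_sub_extFun]
        refine Set.mem_union_left _ ⟨1 - p, hP.2.2.1 p hp, Or.inr ?_⟩
        norm_num
      · rw [one_sub_extFun]
        refine Set.mem_union_left _ ⟨1 - p, hP.2.2.1 p hp, Or.inl ?_⟩
        norm_num
      · rw [one_sub_extFun]
        exact memB
      · rw [one_sub_extFun, sub_sub_cancel, sub_sub_cancel]
        exact memA
    · -- triple sums
      intro f g h hf hg hh o12 o23 o31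
      have o21 := osymm o12
      have o32 := osymm o23
      have o13 := osymm o31
      rcases classify f hf with cf | rfl | rfl
      · rcases classify g hg with cg | rfl | rfl
        · rcases classify h hh with ch | rfl | rfl
          · exact Set.mem_union_left _ (sumPPP f g h cf cg ch o12 o23 o31)
          · rw [hA0 f cf o13, hA0 g cg o23, zero_add, zero_add]
            exact memA
          · rw [hB0 f cf o13, hB0 g cg o23, zero_add, zero_add]
            exact memB
        · rcases classify h hh with ch | rfl | rfl
          · rw [hA0 f cf o12, hA0 h ch o32, zero_add, add_zero]
            exact memA
          · exact (hAA o23).elim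
          · rw [hA0 f cf o12, zero_add, hABsum]
            exact Set.mem_union_left _ hone
        · rcases classify h hh with ch | rfl | rfl
          · rw [hB0 f cf o12, hB0 h ch o32, zero_add, add_zero]
            exact memB
          · rw [hB0 f cf o12, zero_add, add_comm, hABsum]
            exact Set.mem_union_left _ hone
          · exact (hBB o23).elim
      · rcases classify g hg with cg | rfl | rfl
        · rcases classify h hh with ch | rfl | rfl
          · rw [hA0 g cg o21, hA0 h ch o31, add_zero, add_zero]
            exact memA
          · exact (hAA o31).elim
          · rw [hA0 g cg o21, add_zero, hABsum]
            exact Set.mem_union_left _ hone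
        · exact (hAA o12).elim
        · rcases classify h hh with ch | rfl | rfl
          · rw [hB0 h ch o32, add_zero, hABsum]
            exact Set.mem_union_left _ hone
          · exact (hAA o31).elim
          · exact (hBB o23).elim
      · rcases classify g hg with cg | rfl | rfl
        · rcases classify h hh with ch | rfl | rfl
          · rw [hB0 g cg o21, hB0 h ch o31, add_zero, add_zero]
            exact memB
          · rw [hB0 g cg o21, add_zero, add_comm, hABsum]
            exact Set.mem_union_left _ hone
          · exact (hBB o13).elim
        · rcases classify h hh with ch | rfl | rfl
          · rw [hA0 h ch o32, add_zero, add_comm, hABsum]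
            exact Set.mem_union_left _ hone
          · exact (hAA o23).elim
          · exact (hBB o13).elim
        · exact (hBB o12).elim
  · -- no Boolean extension
    rintro ⟨Q, hQB, hsub⟩
    obtain ⟨p, hpP, hp0, hp1, hpr⟩ := hex
    have hQA : IsAlg (Option S) Q := hQB.1
    have hqbarQ : extFun q c ∈ Q := hsub (Set.mem_union_right _ rfl)
    have h1p : (1 : S → ℝ) - p ∈ P := hP.2.2.1 p hpP
    have h1p0 : (1 : S → ℝ) - p ≠ 0 := fun h => hp1 (sub_eq_zero.mp h).symm
    have h1p1 : (1 : S → ℝ) - p ≠ 1 := fun h => hp0 (by simpa using sub_eq_self.mp h)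
    rcases hpr with hbelow | habove
    · have haQ : extFun p 0 ∈ Q := hsub (Set.mem_union_left _ ⟨p, hpP, Or.inl rfl⟩)
      obtain ⟨m, hm⟩ := (hQB.2.1 (extFun p 0) haQ (extFun q c) hqbarQ).1
      have hm0 : m = 0 := by
        apply half_eq_zero hQA hm.1
        intro x
        cases x with
        | none =>
          have := hm.2.1 none
          simp only [extFun, Option.elim] at this
          linarith
        | some s =>
          have h1 := hm.2.1 (some s)
          have h2 := hm.2.2.1 (some s)
          simp only [extFun, Option.elim] at h1 h2
          exact le_trans (le_min h1 h2) (hbelow s)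
      subst hm0
      have horth := inf_zero_orth hQB haQ hqbarQ hm
      refine (hnc (1 - p) h1p h1p0 h1p1).1 ?_
      intro s
      have := horth (some s)
      simp only [extFun, Option.elim, Pi.sub_apply, Pi.one_apply] at this ⊢
      linarith
    · have haQ : extFun (1 - p) 0 ∈ Q := hsub (Set.mem_union_left _ ⟨1 - p, h1p, Or.inl rfl⟩)
      have hbQ : (1 : Option S → ℝ) - extFun q c ∈ Q := hQA.2.2.1 _ hqbarQ
      obtain ⟨m, hm⟩ := (hQB.2.1 (extFun (1 - p) 0) haQ ((1 : Option S → ℝ) - extFun q c) hbQ).1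
      have hm0 : m = 0 := by
        apply half_eq_zero hQA hm.1
        intro x
        cases x with
        | none =>
          have := hm.2.1 none
          simp only [extFun, Option.elim] at this
          linarith
        | some s =>
          have h1 := hm.2.1 (some s)
          have h2 := hm.2.2.1 (some s)
          simp only [extFun, Option.elim, Pi.sub_apply, Pi.one_apply] at h1 h2
          have hmax := habove s
          have hmin : min (1 - p s) (1 - q s) ≤ 1 / 2 := by
            rcases le_total (p s) (q s) with hle | hle
            · have hx : max (p s) (q s) = q s := max_eq_right hle
              rw [hx] at hmax
              calc min (1 - p s) (1 - q s) ≤ 1 - q s := min_le_right _ _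
                _ ≤ 1 / 2 := by linarith
            · have hx : max (p s) (q s) = p s := max_eq_left hle
              rw [hx] at hmax
              calc min (1 - p s) (1 - q s) ≤ 1 - p s := min_le_left _ _
                _ ≤ 1 / 2 := by linarith
          exact le_trans (le_min h1 h2) hmin
      subst hm0
      have horth := inf_zero_orth hQB haQ hbQ hm
      refine (hnc (1 - p) h1p h1p0 h1p1).2 ?_
      intro s
      have := horth (some s)
      simp only [extFun, Option.elim, Pi.sub_apply, Pi.one_apply] at this ⊢
      linarith
end

section
/- Let P be an algebra of S-probabilities with 0,1-extension P̄ on S̄, let p ∈ P, let c ∈ ℝ with 0 < c < 1, and set q̄ := (p, c) (the S̄-probability agreeing with p on S and taking the value c at s̄). Then q̄ is destructive: there exists no algebra Q of S̄-probabilities with P̄ ∪ {q̄} ⊆ Q. -/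
theorem stmt_6 {S : Type*} [Nonempty S] {P : Set (S → ℝ)} (hP : IsAlg S P)
    {p : S → ℝ} (hp : p ∈ P) {c : ℝ} (hc0 : 0 < c) (hc1 : c < 1) :
    ¬∃ Q : Set (Option S → ℝ), IsAlg (Option S) Q ∧ extSet P ∪ {extFun p c} ⊆ Q := by
  rintro ⟨Q, ⟨hprob, h0Q, hcompl, hsum⟩, hsub⟩
  have hpprob : IsProb S p := hP.1 p hp
  have hq : extFun p c ∈ Q := hsub (Or.inr rfl)
  have hp0 : extFun p 0 ∈ Q := hsub (Or.inl ⟨p, hp, Or.inl rfl⟩)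
  have hp1' : extFun (1 - p) 0 ∈ Q := hsub (Or.inl ⟨1 - p, hP.2.2.1 p hp, Or.inl rfl⟩)
  have hqc : (1 - extFun p c) ∈ Q := hcompl _ hq
  -- extFun 0 c ∈ Q
  have h0c : extFun (0 : S → ℝ) c ∈ Q := by
    have hmem : extFun p 0 + (1 - extFun p c) + 0 ∈ Q := by
      apply hsum _ _ _ hp0 hqc h0Q
      · intro x; cases x with
        | none => simp [extFun]; try linarith
        | some s => simp [extFun]
      · intro x; cases x with
        | none => simp [extFun]; try linarith
        | some s => have h1 := (hpprob s).1; have h1 := (hpprob s).1; have h1 := (hpprob s).1; have h2 := (hpprob s).2; simp [extFun]; try linarith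
      · intro x; cases x with
        | none => simp [extFun]; try norm_num
        | some s => have h1 := (hpprob s).1; have h1 := (hpprob s).1; have h2 := (hpprob s).2; simp [extFun]; try linarith
    have := hcompl _ hmem
    convert this using 1
    funext x; cases x <;> simp [extFun] <;> ring
  -- extFun 0 (1-c) ∈ Q
  have h0c' : extFun (0 : S → ℝ) (1 - c) ∈ Q := by
    have hmem : extFun (1 - p) 0 + extFun p c + 0 ∈ Q := by
      apply hsum _ _ _ hp1' hq h0Q
      · intro x; cases x with
        | none => simp [extFun]; try linarith
        | some s => simp [extFun]
      · intro x; cases x with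
        | none => simp [extFun]; try linarith
        | some s => have h1 := (hpprob s).1; have h1 := (hpprob s).1; have h2 := (hpprob s).2; simp [extFun]; try linarith
      · intro x; cases x with
        | none => simp [extFun]; try norm_num
        | some s => have h1 := (hpprob s).1; have h2 := (hpprob s).2; simp [extFun]; try linarith
    have := hcompl _ hmem
    convert this using 1
    funext x; cases x <;> simp [extFun] <;> ring
  set d : ℝ := min c (1 - c) with hd
  have hd0 : 0 < d := lt_min hc0 (by linarith)
  have hdh : d ≤ 1 / 2 := by
    rcases le_total c (1 - c) with h | h
    · calc d ≤ c := min_le_left _ _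
        _ ≤ 1 / 2 := by linarith
    · calc d ≤ 1 - c := min_le_right _ _
        _ ≤ 1 / 2 := by linarith
  have hdQ : extFun (0 : S → ℝ) d ∈ Q := by
    rcases min_cases c (1 - c) with ⟨h, _⟩ | ⟨h, _⟩ <;> rw [hd, h] <;> assumption
  -- induction: multiples of d
  have key : ∀ n : ℕ, ((n : ℝ) + 1) * d ≤ 1 → extFun (0 : S → ℝ) (((n : ℝ) + 1) * d) ∈ Q := by
    intro n
    induction n with
    | zero => intro _; simpa using hdQ
    | succ m ih =>
      intro hle
      push_cast at hle ⊢
      have hle' : ((m : ℝ) + 1) * d ≤ 1 := by nlinarith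
      have hm := ih hle'
      have hmem : extFun (0 : S → ℝ) (((m : ℝ) + 1) * d) + extFun (0 : S → ℝ) d + 0 ∈ Q := by
        apply hsum _ _ _ hm hdQ h0Q
        · intro x; cases x with
          | none => simp [extFun]; try linarith
          | some s => simp [extFun]
        · intro x; cases x with
          | none => simp [extFun]; try linarith
          | some s => simp [extFun]; try linarith
        · intro x; cases x with
          | none => simp [extFun]; try nlinarith [hd0.le, hle]
          | some s => simp [extFun]
      convert hmem using 1
      funext x; cases x <;> simp [extFun] <;> ring
  -- floor argument
  obtain ⟨k, hk2, hkle, hkgt⟩ :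
      ∃ k : ℕ, 2 ≤ k ∧ (k : ℝ) * d ≤ 1 ∧ 1 < ((k : ℝ) + 1) * d := by
    refine ⟨⌊1 / d⌋₊, Nat.le_floor ?_, ?_, ?_⟩
    · rw [le_div_iff₀ hd0]; push_cast; linarith
    · have h1 := Nat.floor_le (le_of_lt (by positivity : (0:ℝ) < 1 / d))
      calc (⌊1 / d⌋₊ : ℝ) * d ≤ (1 / d) * d := by nlinarith
        _ = 1 := by field_simp
    · have h2 := Nat.lt_floor_add_one (1 / d)
      calc (1 : ℝ) = (1 / d) * d := by field_simp
        _ < ((⌊1 / d⌋₊ : ℝ) + 1) * d := by nlinarith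
  obtain ⟨m, rfl⟩ : ∃ m, k = m + 2 := ⟨k - 2, by omega⟩
  push_cast at hkle hkgt
  have ha : extFun (0 : S → ℝ) (((m : ℝ) + 1) * d) ∈ Q := key m (by nlinarith)
  have hmem : extFun (0 : S → ℝ) (((m : ℝ) + 1) * d) + extFun (0 : S → ℝ) d
      + extFun (0 : S → ℝ) d ∈ Q := by
    apply hsum _ _ _ ha hdQ hdQ
    · intro x; cases x with
      | none => simp [extFun]; try linarith
      | some s => simp [extFun]
    · intro x; cases x with
      | none => simp [extFun]; try linarith
      | some s => simp [extFun]; try linarith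
    · intro x; cases x with
      | none => simp [extFun]; try linarith
      | some s => simp [extFun]
  have hle1 := (hprob _ hmem none).2
  simp [extFun] at hle1
  nlinarith
end

section
/- Let P be an algebra of S-probabilities and p, q ∈ P. If p and q are partially reciprocal below 1/2 and u ∈ P satisfies u ≤ p and u ≤ q, then u = 0. Dually, if p and q are partially reciprocal above 1/2 and v ∈ P satisfies p ≤ v and q ≤ v, then v = 1. -/
lemma aux_mul_mem {S : Type*} {P : Set (S → ℝ)} (hP : IsAlg S P)
    {u : S → ℝ} (hu : u ∈ P) (hhalf : ∀ s, u s ≤ 1 / 2) :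
    ∀ n : ℕ, (fun s => (n : ℝ) * u s) ∈ P := by
  obtain ⟨hprob, h0, _, hadd⟩ := hP
  have hu0 : ∀ s, 0 ≤ u s := fun s => (hprob u hu s).1
  intro n
  induction n using Nat.twoStepInduction with
  | zero => simp only [Nat.cast_zero, zero_mul]; exact h0
  | one => simpa using hu
  | more n ih1 ih2 =>
    have hle1 : ∀ s, (n + 1 : ℝ) * u s ≤ 1 := fun s => by
      have := (hprob _ ih2 s).2
      simpa [Nat.cast_succ] using this
    have key := hadd u u (fun s => (n : ℝ) * u s) hu hu ih1 ?_ ?_ ?_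
    · have : (u + u + fun s => (n : ℝ) * u s) = fun s => ((n + 2 : ℕ) : ℝ) * u s := by
        funext s; simp [Nat.cast_add]; ring
      rwa [this] at key
    · intro s
      have := hhalf s
      simp only [Pi.sub_apply, Pi.one_apply]
      linarith
    · intro s
      have h1 := hle1 s
      have h2 := hu0 s
      simp only [Pi.sub_apply, Pi.one_apply]
      nlinarith
    · intro s
      have h1 := hle1 s
      simp only [Pi.sub_apply, Pi.one_apply]
      nlinarith

lemma aux_below {S : Type*} {P : Set (S → ℝ)} (hP : IsAlg S P)
    {u : S → ℝ} (hu : u ∈ P) (hhalf : ∀ s, u s ≤ 1 / 2) : u = 0 := by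
  funext s
  have hu0 : 0 ≤ u s := (hP.1 u hu s).1
  by_contra h
  have hpos : 0 < u s := lt_of_le_of_ne hu0 (Ne.symm h)
  obtain ⟨n, hn⟩ := exists_nat_gt (1 / u s)
  have := (hP.1 _ (aux_mul_mem hP hu hhalf n) s).2
  have : (1 : ℝ) / u s * u s < (n : ℝ) * u s := by
    exact mul_lt_mul_of_pos_right hn hpos
  rw [one_div_mul_cancel (ne_of_gt hpos)] at this
  have := (hP.1 _ (aux_mul_mem hP hu hhalf n) s).2
  linarith [mul_lt_mul_of_pos_right hn hpos, one_div_mul_cancel (ne_of_gt hpos)]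

theorem stmt_8 {S : Type*} [Nonempty S] {P : Set (S → ℝ)} (hP : IsAlg S P)
    {p q : S → ℝ} (hp : p ∈ P) (hq : q ∈ P) :
    (PRBelow S p q → ∀ u ∈ P, u ≤ p → u ≤ q → u = 0) ∧
    (PRAbove S p q → ∀ v ∈ P, p ≤ v → q ≤ v → v = 1) := by
  constructor
  · intro hpr u huP hup huq
    refine aux_below hP huP fun s => ?_
    have := hpr s
    rcases min_le_iff.mp this with h | h
    · exact le_trans (hup s) h
    · exact le_trans (huq s) h
  · intro hpr v hvP hpv hqv
    have h1v : (1 - v) ∈ P := hP.2.2.1 v hvP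
    have : (1 : S → ℝ) - v = 0 := by
      refine aux_below hP h1v fun s => ?_
      have := hpr s
      simp only [Pi.sub_apply, Pi.one_apply]
      rcases le_max_iff.mp this with h | h
      · linarith [hpv s]
      · linarith [hqv s]
    have := congrFun this
    funext s
    have h := this s
    simp only [Pi.sub_apply, Pi.one_apply, Pi.zero_apply] at h
    simp only [Pi.one_apply]
    linarith
end

section
/- Let P be a Boolean algebra of S-probabilities and let q be a varying S-probability with q ∉ P. Suppose there exists p ∈ P such that one of the following holds: (i) min(p(s), q(s)) ≤ 1/2 for all s ∈ S and p(s₀) + q(s₀) > 1 for some s₀ ∈ S; (ii) max(p(s), q(s)) ≥ 1/2 for all s ∈ S and p(s₀) + q(s₀) < 1 for some s₀ ∈ S; (iii) min(p(s), q(s)) ≤ 1/2 and max(p(s), q(s)) ≥ 1/2 for all s ∈ S. Then q is critical: there exists no Boolean algebra Q of S-probabilities with P ∪ {q} ⊆ Q. -/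
/-- In an algebra, the sum of two orthogonal elements is their supremum. -/
lemma sup_orth {S : Type*} {Q : Set (S → ℝ)} (hA : IsAlg S Q) {x y : S → ℝ}
    (hx : x ∈ Q) (hy : y ∈ Q) (hxy : x ≤ 1 - y) : IsSupIn S Q x y (x + y) := by
  obtain ⟨hprob, h0, hc, hsum⟩ := hA
  have hxyQ : x + y ∈ Q := by
    have h := hsum x y 0 hx hy h0 hxy
      (by intro s; simpa using (hprob y hy s).2)
      (by intro s; have := (hprob x hx s).2
          simp only [Pi.zero_apply, Pi.sub_apply, Pi.one_apply]; linarith)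
    simpa using h
  refine ⟨hxyQ, ?_, ?_, ?_⟩
  · intro s; simp only [Pi.add_apply]; linarith [(hprob y hy s).1]
  · intro s; simp only [Pi.add_apply]; linarith [(hprob x hx s).1]
  · intro u hu hxu hyu
    have h1u : 1 - u ∈ Q := hc u hu
    have hmem : x + y + (1 - u) ∈ Q := by
      refine hsum x y (1 - u) hx hy h1u hxy ?_ ?_
      · intro s; simp only [Pi.sub_apply, Pi.one_apply]
        have := hyu s; linarith
      · intro s; simp only [Pi.sub_apply, Pi.one_apply]
        have := hxu s; linarith
    intro s
    have := (hprob _ hmem s).2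
    simp only [Pi.add_apply, Pi.sub_apply, Pi.one_apply] at this ⊢
    linarith

/-- In a Boolean algebra, inf(x,y) + inf(x,1-y) = x. -/
lemma myInfAdd {S : Type*} {Q : Set (S → ℝ)} (hB : IsBooleanAlg S Q) {x y m m' : S → ℝ}
    (hx : x ∈ Q) (hy : y ∈ Q) (hm : IsInfIn S Q x y m) (hm' : IsInfIn S Q x (1 - y) m') :
    m + m' = x := by
  obtain ⟨hA, _, hdist, hcomp⟩ := hB
  have hprob := hA.1
  have h1y : 1 - y ∈ Q := hA.2.2.1 y hy
  have horth : m ≤ 1 - m' := by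
    intro s
    have h1 := hm.2.2.1 s
    have h2 := hm'.2.2.1 s
    simp only [Pi.sub_apply, Pi.one_apply] at *
    linarith
  have hsupmm : IsSupIn S Q m m' (m + m') := by
    refine sup_orth hA hm.1 hm'.1 ?_
    intro s
    have h1 := hm.2.2.1 s
    have h2 := hm'.2.2.1 s
    simp only [Pi.sub_apply, Pi.one_apply] at *
    linarith
  have hsup1 : IsSupIn S Q y (1 - y) 1 := (hcomp y hy).2
  have hinfx1 : IsInfIn S Q x 1 x := by
    refine ⟨hx, le_refl x, ?_, fun u _ hux _ => hux⟩
    intro s; exact (hprob x hx s).2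
  exact (hdist x hx y hy (1 - y) h1y 1 x m m' (m + m') hsup1 hinfx1 hm hm' hsupmm).symm

/-- In a Boolean algebra, an element everywhere ≤ 1/2 is 0. -/
lemma half_eq_zero_s9 {S : Type*} {Q : Set (S → ℝ)} (hB : IsBooleanAlg S Q) {a : S → ℝ}
    (ha : a ∈ Q) (h : ∀ s, a s ≤ 1 / 2) : a = 0 := by
  have h0 : IsInfIn S Q a (1 - a) 0 := ((hB.2.2.2) a ha).1
  have hle : a ≤ (0 : S → ℝ) := by
    refine h0.2.2.2 a ha (le_refl a) ?_
    intro s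
    simp only [Pi.sub_apply, Pi.one_apply]
    have := h s; linarith
  funext s
  have h1 := hle s
  have h2 := (hB.1.1 a ha s).1
  simp only [Pi.zero_apply] at *
  linarith

/-- Key: if min(x s, y s) ≤ 1/2 for all s, then x ≤ 1 - y in a Boolean algebra. -/
lemma key_le {S : Type*} {Q : Set (S → ℝ)} (hB : IsBooleanAlg S Q) {x y : S → ℝ}
    (hx : x ∈ Q) (hy : y ∈ Q) (h : ∀ s, min (x s) (y s) ≤ 1 / 2) : x ≤ 1 - y := by
  have h1y : 1 - y ∈ Q := hB.1.2.2.1 y hy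
  obtain ⟨m, hm⟩ := ((hB.2.1) x hx y hy).1
  obtain ⟨m', hm'⟩ := ((hB.2.1) x hx (1 - y) h1y).1
  have hadd : m + m' = x := myInfAdd hB hx hy hm hm'
  have hm0 : m = 0 := by
    refine half_eq_zero_s9 hB hm.1 ?_
    intro s
    have h1 := hm.2.1 s
    have h2 := hm.2.2.1 s
    have := h s
    rcases min_le_iff.mp this with h' | h' <;> linarith
  intro s
  have := congrFun hadd s
  have h2 := hm'.2.2.1 s
  simp only [hm0, Pi.add_apply, Pi.zero_apply, Pi.sub_apply, Pi.one_apply] at *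
  linarith

theorem stmt_9 {S : Type*} [Nonempty S] {P : Set (S → ℝ)} (hP : IsBooleanAlg S P)
    {q : S → ℝ} (hq : IsProb S q) (hqv : Varying S q) (hqn : q ∉ P)
    (hex : ∃ p ∈ P,
      ((∀ s, min (p s) (q s) ≤ 1 / 2) ∧ ∃ s0, 1 < p s0 + q s0) ∨
      ((∀ s, 1 / 2 ≤ max (p s) (q s)) ∧ ∃ s0, p s0 + q s0 < 1) ∨
      ((∀ s, min (p s) (q s) ≤ 1 / 2) ∧ (∀ s, 1 / 2 ≤ max (p s) (q s)))) :
    ¬∃ Q : Set (S → ℝ), IsBooleanAlg S Q ∧ P ∪ {q} ⊆ Q := by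
  rintro ⟨Q, hBQ, hsub⟩
  obtain ⟨p, hpP, hcase⟩ := hex
  have hpQ : p ∈ Q := hsub (Or.inl hpP)
  have hqQ : q ∈ Q := hsub (Or.inr rfl)
  have hc : ∀ x ∈ Q, 1 - x ∈ Q := hBQ.1.2.2.1
  rcases hcase with ⟨hmin, s0, hs0⟩ | ⟨hmax, s0, hs0⟩ | ⟨hmin, hmax⟩
  · have h := key_le hBQ hpQ hqQ hmin s0
    simp only [Pi.sub_apply, Pi.one_apply] at h
    linarith
  · have h := key_le hBQ (hc p hpQ) (hc q hqQ) (fun s => by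
      simp only [Pi.sub_apply, Pi.one_apply]
      rcases le_max_iff.mp (hmax s) with h' | h'
      · exact min_le_iff.mpr (Or.inl (by linarith))
      · exact min_le_iff.mpr (Or.inr (by linarith))) s0
    simp only [Pi.sub_apply, Pi.one_apply] at h
    linarith
  · have h1 := key_le hBQ hqQ hpQ (fun s => by rw [min_comm]; exact hmin s)
    have h2 := key_le hBQ (hc q hqQ) (hc p hpQ) (fun s => by
      simp only [Pi.sub_apply, Pi.one_apply]
      rcases le_max_iff.mp (hmax s) with h' | h'
      · exact min_le_iff.mpr (Or.inr (by linarith))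
      · exact min_le_iff.mpr (Or.inl (by linarith)))
    have hq1p : q = 1 - p := by
      funext s
      have a := h1 s
      have b := h2 s
      simp only [Pi.sub_apply, Pi.one_apply] at a b ⊢
      linarith
    exact hqn (hq1p ▸ hP.1.2.2.1 p hpP)
end

section
/- Let P be an algebra of S-probabilities that is not a Boolean algebra of S-probabilities, and let q be a varying S-probability with q ∉ P. Suppose there exists p ∈ P such that the four functions p, q, 1 − p, 1 − q are pairwise distinct and every pair of distinct functions among them is reciprocal. Then q is not critical: there exists no Boolean algebra Q of S-probabilities with P ∪ {q} ⊆ Q. -/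
theorem stmt_10 {S : Type*} [Nonempty S] {P : Set (S → ℝ)} (hP : IsAlg S P)
    (hnB : ¬IsBooleanAlg S P)
    {q : S → ℝ} (hq : IsProb S q) (hqv : Varying S q) (hqn : q ∉ P)
    (hex : ∃ p ∈ P,
      (p ≠ q ∧ p ≠ 1 - p ∧ p ≠ 1 - q ∧ q ≠ 1 - p ∧ q ≠ 1 - q ∧ (1 - p : S → ℝ) ≠ 1 - q) ∧
      (Reciprocal S p q ∧ Reciprocal S p (1 - p) ∧ Reciprocal S p (1 - q) ∧
       Reciprocal S q (1 - p) ∧ Reciprocal S q (1 - q) ∧ Reciprocal S (1 - p) (1 - q))) :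
    ¬∃ Q : Set (S → ℝ), IsBooleanAlg S Q ∧ P ∪ {q} ⊆ Q := by
  rintro ⟨Q, ⟨hAlg, hIS, hDist, hCompl⟩, hsub⟩
  obtain ⟨p, hpP, _hdist, hrec⟩ := hex
  have hpQ : p ∈ Q := hsub (Or.inl hpP)
  have hqQ : q ∈ Q := hsub (Or.inr rfl)
  have hq'Q : (1 - q) ∈ Q := hAlg.2.2.1 q hqQ
  -- Any element of Q that is pointwise ≤ 1/2 equals 0.
  have key : ∀ x ∈ Q, (∀ s, x s ≤ 1 / 2) → x = 0 := by
    intro x hxQ hx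
    have h0 := (hCompl x hxQ).1
    have hle : x ≤ (0 : S → ℝ) := by
      refine h0.2.2.2 x hxQ le_rfl ?_
      intro s
      have := hx s
      simp only [Pi.sub_apply, Pi.one_apply]
      linarith
    have hge : (0 : S → ℝ) ≤ x := fun s => (hAlg.1 x hxQ s).1
    exact le_antisymm hle hge
  obtain ⟨⟨m, hm⟩, -⟩ := hIS p hpQ q hqQ
  obtain ⟨⟨n, hn⟩, -⟩ := hIS p hpQ (1 - q) hq'Q
  have hm0 : m = 0 := by
    refine key m hm.1 ?_
    intro s
    have h1 := hm.2.1 s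
    have h2 := hm.2.2.1 s
    rcases min_le_iff.mp (hrec.1.1 s) with h | h <;> linarith
  have hn0 : n = 0 := by
    refine key n hn.1 ?_
    intro s
    have h1 := hn.2.1 s
    have h2 := hn.2.2.1 s
    rcases min_le_iff.mp (hrec.2.2.1.1 s) with h | h
    · linarith
    · simp only [Pi.sub_apply, Pi.one_apply] at h h2; linarith
  have hinfp1 : IsInfIn S Q p 1 p := by
    refine ⟨hpQ, le_rfl, ?_, fun u _ h1 _ => h1⟩
    intro s
    exact (hAlg.1 p hpQ s).2
  have hsup00 : IsSupIn S Q 0 0 0 :=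
    ⟨hAlg.2.1, le_rfl, le_rfl, fun u huQ _ _ s => (hAlg.1 u huQ s).1⟩
  have hp0 : p = 0 :=
    hDist p hpQ q hqQ (1 - q) hq'Q 1 p 0 0 0 (hCompl q hqQ).2 hinfp1
      (hm0 ▸ hm) (hn0 ▸ hn) hsup00
  refine hqv.2 ?_
  intro s
  have h := hrec.1.2 s
  rw [hp0] at h
  simp only [Pi.zero_apply] at h
  rcases le_max_iff.mp h with h | h
  · linarith
  · exact h
end

section
/- Let P be an algebra of S-probabilities that is not a Boolean algebra of S-probabilities, and let q be a varying S-probability with q ∉ P. Suppose there exist p₁, p₂ ∈ P such that the four functions p₁, p₂, 1 − p₁, 1 − p₂ are pairwise distinct and every pair of distinct functions among them is reciprocal. Then q is not critical: there exists no Boolean algebra Q of S-probabilities with P ∪ {q} ⊆ Q. -/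
theorem stmt_11 {S : Type*} [Nonempty S] {P : Set (S → ℝ)} (hP : IsAlg S P)
    (hnB : ¬IsBooleanAlg S P)
    {q : S → ℝ} (hq : IsProb S q) (hqv : Varying S q) (hqn : q ∉ P)
    (hex : ∃ p1 ∈ P, ∃ p2 ∈ P,
      (p1 ≠ p2 ∧ p1 ≠ 1 - p1 ∧ p1 ≠ 1 - p2 ∧ p2 ≠ 1 - p1 ∧ p2 ≠ 1 - p2 ∧
        (1 - p1 : S → ℝ) ≠ 1 - p2) ∧
      (Reciprocal S p1 p2 ∧ Reciprocal S p1 (1 - p1) ∧ Reciprocal S p1 (1 - p2) ∧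
       Reciprocal S p2 (1 - p1) ∧ Reciprocal S p2 (1 - p2) ∧ Reciprocal S (1 - p1) (1 - p2))) :
    ¬∃ Q : Set (S → ℝ), IsBooleanAlg S Q ∧ P ∪ {q} ⊆ Q := by
  rintro ⟨Q, ⟨⟨hQprob, hQ0, hQc, _⟩, _, hD, hC⟩, hPQ⟩
  obtain ⟨p1, hp1, p2, hp2, _, hr12, _, hr12', hr21', _, _⟩ := hex
  have hp1Q : p1 ∈ Q := hPQ (Set.mem_union_left _ hp1)
  have hp2Q : p2 ∈ Q := hPQ (Set.mem_union_left _ hp2)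
  have hp1'Q : (1 - p1) ∈ Q := hQc p1 hp1Q
  have hp2'Q : (1 - p2) ∈ Q := hQc p2 hp2Q
  -- any element of Q that is pointwise ≤ 1/2 must be 0
  have key : ∀ u ∈ Q, (∀ s, u s ≤ 1 / 2) → u = (0 : S → ℝ) := by
    intro u hu h
    have h1 : u ≤ 1 - u := by
      intro s
      have := h s
      simp only [Pi.sub_apply, Pi.one_apply]
      linarith
    have h2 : u ≤ 0 := (hC u hu).1.2.2.2 u hu le_rfl h1
    exact le_antisymm h2 (hC u hu).1.2.1
  -- 0 is the infimum in Q of any two elements whose pointwise min is ≤ 1/2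
  have hinf : ∀ x ∈ Q, ∀ y ∈ Q, (∀ s, min (x s) (y s) ≤ 1 / 2) →
      IsInfIn S Q x y 0 := by
    intro x hx y hy hmin
    refine ⟨hQ0, fun s => (hQprob x hx s).1, fun s => (hQprob y hy s).1, ?_⟩
    intro u hu hux huy
    have hu2 : ∀ s, u s ≤ 1 / 2 := fun s =>
      le_trans (le_min (hux s) (huy s)) (hmin s)
    exact le_of_eq (key u hu hu2)
  have hsup00 : IsSupIn S Q 0 0 0 := ⟨hQ0, le_rfl, le_rfl, fun u _ h _ => h⟩
  -- p ∧ 1 = p in Q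
  have hinf1 : ∀ x ∈ Q, IsInfIn S Q x 1 x := by
    intro x hx
    refine ⟨hx, le_rfl, ?_, fun u _ h _ => h⟩
    intro s
    simpa using (hQprob x hx s).2
  -- p1 = 0 via distributivity: p1 = p1 ∧ (p2 ∨ p2') = (p1∧p2) ∨ (p1∧p2') = 0
  have hp1z : p1 = (0 : S → ℝ) :=
    hD p1 hp1Q p2 hp2Q (1 - p2) hp2'Q 1 p1 0 0 0
      (hC p2 hp2Q).2 (hinf1 p1 hp1Q)
      (hinf p1 hp1Q p2 hp2Q hr12.1)
      (hinf p1 hp1Q (1 - p2) hp2'Q hr12'.1)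
      hsup00
  -- p2 = 0 symmetrically
  have hp2z : p2 = (0 : S → ℝ) :=
    hD p2 hp2Q p1 hp1Q (1 - p1) hp1'Q 1 p2 0 0 0
      (hC p1 hp1Q).2 (hinf1 p2 hp2Q)
      (hinf p2 hp2Q p1 hp1Q (fun s => by rw [min_comm]; exact hr12.1 s))
      (hinf p2 hp2Q (1 - p1) hp1'Q hr21'.1)
      hsup00
  -- contradiction with PRAbove of p1 p2
  have := hr12.2 (Classical.arbitrary S)
  rw [hp1z, hp2z] at this
  simp at this
  linarith
end

section
/- Let P be an algebra of S-probabilities that is not a Boolean algebra of S-probabilities, and let q be a varying S-probability with q ∉ P. Suppose there exist varying p₁, p₂, p₃, p₄ ∈ P that are pairwise partially reciprocal below 1/2 (i.e., min(pᵢ(s), pⱼ(s)) ≤ 1/2 for all s ∈ S whenever i ≠ j) such that p₁ ≤ 1 − p₂, p₃ ≤ 1 − p₄, and p₁ + p₂ = p₃ + p₄. Then q is not critical: there exists no Boolean algebra Q of S-probabilities with P ∪ {q} ⊆ Q. -/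
theorem stmt_12 {S : Type*} [Nonempty S] {P : Set (S → ℝ)} (hP : IsAlg S P)
    (hnB : ¬IsBooleanAlg S P)
    {q : S → ℝ} (hq : IsProb S q) (hqv : Varying S q) (hqn : q ∉ P)
    (hex : ∃ p1 ∈ P, ∃ p2 ∈ P, ∃ p3 ∈ P, ∃ p4 ∈ P,
      Varying S p1 ∧ Varying S p2 ∧ Varying S p3 ∧ Varying S p4 ∧
      PRBelow S p1 p2 ∧ PRBelow S p1 p3 ∧ PRBelow S p1 p4 ∧
      PRBelow S p2 p3 ∧ PRBelow S p2 p4 ∧ PRBelow S p3 p4 ∧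
      p1 ≤ 1 - p2 ∧ p3 ≤ 1 - p4 ∧ p1 + p2 = p3 + p4) :
    ¬∃ Q : Set (S → ℝ), IsBooleanAlg S Q ∧ P ∪ {q} ⊆ Q := by
  rintro ⟨Q, hB, hsub⟩
  obtain ⟨p1, hp1, p2, hp2, p3, hp3, p4, hp4, hv1, hv2, hv3, hv4,
    h12, h13, h14, h23, h24, h34, ho12, ho34, hsum⟩ := hex
  obtain ⟨⟨hQprob, hQ0, hQcompl, hQsum⟩, hlat, hdist, hcpl⟩ := hB
  have hp1Q : p1 ∈ Q := hsub (Or.inl hp1)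
  have hp2Q : p2 ∈ Q := hsub (Or.inl hp2)
  have hp3Q : p3 ∈ Q := hsub (Or.inl hp3)
  have hp4Q : p4 ∈ Q := hsub (Or.inl hp4)
  -- any element of Q that is everywhere ≤ 1/2 is ≤ 0
  have hzero : ∀ u ∈ Q, (∀ s, u s ≤ 1 / 2) → u ≤ 0 := by
    intro u hu hhalf
    have h1 := (hcpl u hu).1
    exact h1.2.2.2 u hu (le_refl u) (by
      intro s
      have := hhalf s
      simp only [Pi.sub_apply, Pi.one_apply]
      linarith)
  set w : S → ℝ := p3 + p4 with hw
  have hwQ : w ∈ Q := by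
    have h := hQsum p3 p4 0 hp3Q hp4Q hQ0 ho34
      (by intro s; simp only [Pi.sub_apply, Pi.one_apply, Pi.zero_apply, sub_zero]
          exact (hQprob p4 hp4Q s).2)
      (by intro s; simp only [Pi.sub_apply, Pi.one_apply, Pi.zero_apply]
          have := (hQprob p3 hp3Q s).2; linarith)
    simpa using h
  have hsup34 : IsSupIn S Q p3 p4 w := by
    refine ⟨hwQ, ?_, ?_, ?_⟩
    · intro s; simp only [hw, Pi.add_apply]; have := (hQprob p4 hp4Q s).1; linarith
    · intro s; simp only [hw, Pi.add_apply]; have := (hQprob p3 hp3Q s).1; linarith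
    · intro u hu h3u h4u
      have hmem := hQsum p3 p4 (1 - u) hp3Q hp4Q (hQcompl u hu) ho34
        (by intro s
            simp only [Pi.sub_apply, Pi.one_apply]
            have := h4u s; simp only [Pi.sub_apply, Pi.one_apply] at this ⊢; linarith)
        (by intro s
            have := h3u s
            simp only [Pi.sub_apply, Pi.one_apply] at this ⊢; linarith)
      intro s
      have := (hQprob _ hmem s).2
      simp only [Pi.add_apply, Pi.sub_apply, Pi.one_apply, hw] at this ⊢
      linarith
  have hp1w : p1 ≤ w := by
    intro s
    have := congrFun hsum s
    simp only [Pi.add_apply] at this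
    have h2 := (hQprob p2 hp2Q s).1
    have hws : w s = p3 s + p4 s := rfl
    simp only [hw, Pi.add_apply]
    linarith
  have hinf1w : IsInfIn S Q p1 w p1 := ⟨hp1Q, le_refl _, hp1w, fun u _ h _ => h⟩
  have hinf13 : IsInfIn S Q p1 p3 0 := by
    refine ⟨hQ0, ?_, ?_, ?_⟩
    · intro s; exact (hQprob p1 hp1Q s).1
    · intro s; exact (hQprob p3 hp3Q s).1
    · intro u hu h1 h3
      apply hzero u hu
      intro s
      have hm := h13 s
      have := h1 s; have := h3 s
      rcases min_le_iff.mp hm with h | h <;> linarith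
  have hinf14 : IsInfIn S Q p1 p4 0 := by
    refine ⟨hQ0, ?_, ?_, ?_⟩
    · intro s; exact (hQprob p1 hp1Q s).1
    · intro s; exact (hQprob p4 hp4Q s).1
    · intro u hu h1 h4
      apply hzero u hu
      intro s
      have hm := h14 s
      have := h1 s; have := h4 s
      rcases min_le_iff.mp hm with h | h <;> linarith
  have hsup00 : IsSupIn S Q (0 : S → ℝ) 0 0 :=
    ⟨hQ0, le_refl _, le_refl _, fun u _ h _ => h⟩
  have hp10 : p1 = 0 :=
    hdist p1 hp1Q p3 hp3Q p4 hp4Q w p1 0 0 0 hsup34 hinf1w hinf13 hinf14 hsup00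
  exact hv1.1 (fun s => by rw [hp10]; norm_num)
end

section
/- Let P be an algebra of S-probabilities that is not a Boolean algebra of S-probabilities, and let q be a varying S-probability with q ∉ P. Suppose there exist varying p₁, p₂, p₃ ∈ P such that the four functions p₁, p₂, p₃, q are pairwise partially reciprocal below 1/2 (i.e., any two distinct of them a, b satisfy min(a(s), b(s)) ≤ 1/2 for all s ∈ S), p₁ ≤ 1 − p₂, p₃ ≤ 1 − q, and p₁ + p₂ = p₃ + q. Then q is not critical: there exists no Boolean algebra Q of S-probabilities with P ∪ {q} ⊆ Q. -/
theorem stmt_13 {S : Type*} [Nonempty S] {P : Set (S → ℝ)} (hP : IsAlg S P)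
    (hnB : ¬IsBooleanAlg S P)
    {q : S → ℝ} (hq : IsProb S q) (hqv : Varying S q) (hqn : q ∉ P)
    (hex : ∃ p1 ∈ P, ∃ p2 ∈ P, ∃ p3 ∈ P,
      Varying S p1 ∧ Varying S p2 ∧ Varying S p3 ∧
      PRBelow S p1 p2 ∧ PRBelow S p1 p3 ∧ PRBelow S p1 q ∧
      PRBelow S p2 p3 ∧ PRBelow S p2 q ∧ PRBelow S p3 q ∧
      p1 ≤ 1 - p2 ∧ p3 ≤ 1 - q ∧ p1 + p2 = p3 + q) :
    ¬∃ Q : Set (S → ℝ), IsBooleanAlg S Q ∧ P ∪ {q} ⊆ Q := by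
  rintro ⟨Q, ⟨⟨hQprob, hQ0, hQcompl, hQadd⟩, hinfsup, hdistr, hcomp⟩, hsub⟩
  obtain ⟨p1, hp1P, p2, hp2P, p3, hp3P, hv1, hv2, hv3, h12, h13, h1q,
    h23, h2q, h3q, ho12, ho3q, hsum⟩ := hex
  have hp1Q : p1 ∈ Q := hsub (Or.inl hp1P)
  have hp3Q : p3 ∈ Q := hsub (Or.inl hp3P)
  have hqQ : q ∈ Q := hsub (Or.inr rfl)
  have hp2prob := hP.1 p2 hp2P
  have hp3prob := hP.1 p3 hp3P
  -- t = p3 + q belongs to Q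
  have htQ : p3 + q ∈ Q := by
    have h1 : q ≤ 1 - (0 : S → ℝ) := by intro s; simpa using (hq s).2
    have h2 : (0 : S → ℝ) ≤ 1 - p3 := by
      intro s; simp only [Pi.zero_apply, Pi.sub_apply, Pi.one_apply]
      linarith [(hp3prob s).2]
    have := hQadd p3 q 0 hp3Q hqQ hQ0 ho3q h1 h2
    simpa using this
  -- sup of p3 and q in Q is p3 + q
  have hsupt : IsSupIn S Q p3 q (p3 + q) := by
    refine ⟨htQ, ?_, ?_, ?_⟩
    · intro s; simp only [Pi.add_apply]; linarith [(hq s).1]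
    · intro s; simp only [Pi.add_apply]; linarith [(hp3prob s).1]
    · intro u huQ hu3 huq
      have h1uQ : 1 - u ∈ Q := hQcompl u huQ
      have ho1 : q ≤ 1 - (1 - u) := by
        intro s; simp only [Pi.sub_apply, Pi.one_apply]; linarith [huq s]
      have ho2 : (1 : S → ℝ) - u ≤ 1 - p3 := by
        intro s; simp only [Pi.sub_apply, Pi.one_apply]; linarith [hu3 s]
      have hmem := hQadd p3 q (1 - u) hp3Q hqQ h1uQ ho3q ho1 ho2
      have hle1 := hQprob _ hmem
      intro s
      have := (hle1 s).2
      simp only [Pi.add_apply, Pi.sub_apply, Pi.one_apply] at this ⊢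
      linarith
  -- infs with p1 are zero
  have zero_inf : ∀ r ∈ Q, PRBelow S p1 r → IsInfIn S Q p1 r 0 := by
    intro r hrQ hpr
    obtain ⟨m, hmQ, hmp, hmr, hmmax⟩ := ((hinfsup p1 hp1Q r hrQ).1)
    have hmprob := hQprob m hmQ
    have hmhalf : ∀ s, m s ≤ 1 / 2 := by
      intro s
      calc m s ≤ min (p1 s) (r s) := le_min (hmp s) (hmr s)
        _ ≤ 1 / 2 := hpr s
    have hm0 : m = 0 := by
      have hle : m ≤ 1 - m := by
        intro s; simp only [Pi.sub_apply, Pi.one_apply]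
        linarith [hmhalf s, (hmprob s).1]
      have := (hcomp m hmQ).1.2.2.2 m hmQ le_rfl hle
      funext s
      exact le_antisymm (this s) (hmprob s).1
    exact hm0 ▸ ⟨hmQ, hmp, hmr, hmmax⟩
  have hA := zero_inf p3 hp3Q h13
  have hB := zero_inf q hqQ h1q
  -- p1 is inf of p1 and p3 + q
  have hp1le : p1 ≤ p3 + q := by
    intro s
    have := congrFun hsum s
    simp only [Pi.add_apply] at this ⊢
    linarith [(hp2prob s).1]
  have hinf1t : IsInfIn S Q p1 (p3 + q) p1 := ⟨hp1Q, le_rfl, hp1le, fun u _ hu _ => hu⟩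
  -- sup of 0 and 0 is 0
  have hsup00 : IsSupIn S Q 0 0 0 := ⟨hQ0, le_rfl, le_rfl, fun u _ hu _ => hu⟩
  have hp10 : p1 = 0 := hdistr p1 hp1Q p3 hp3Q q hqQ (p3 + q) p1 0 0 0 hsupt hinf1t hA hB hsup00
  exact hv1.1 (by rw [hp10]; intro s; norm_num)
end

section
/- Let n ≥ 2, let N := {1, …, n}, and let p₁, …, pₙ be varying S-probabilities with p₁ + ⋯ + pₙ = 1 (the constant function 1). For I ⊆ N set p_I := Σ_{i∈I} pᵢ and let P := {p_I : I ⊆ N}. Then P is an algebra of S-probabilities, and the map I ↦ p_I is an order isomorphism from (2^N, ⊆) onto (P, ≤) (it is bijective, and I ⊆ J if and only if p_I ≤ p_J) satisfying p_{N∖I} = 1 − p_I for all I ⊆ N. Consequently P is a Boolean algebra of S-probabilities with exactly 2^n elements whose atoms are p₁, …, pₙ. -/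
section AuxStmt14

variable {S : Type*} {n : ℕ} {p : Fin n → (S → ℝ)}

private lemma aux14_sum1 (hsum : ∑ i, p i = 1) (s : S) : ∑ i, p i s = 1 := by
  have := congrFun hsum s
  simpa using this

private lemma aux14_mono (hprob : ∀ i, IsProb S (p i)) {I J : Finset (Fin n)} (h : I ⊆ J) :
    (∑ i ∈ I, p i) ≤ ∑ i ∈ J, p i := by
  rw [Pi.le_def]
  intro s
  simp only [Finset.sum_apply]
  exact Finset.sum_le_sum_of_subset_of_nonneg h fun i _ _ => (hprob i s).1

private lemma aux14_subset (hprob : ∀ i, IsProb S (p i)) (hvar : ∀ i, Varying S (p i))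
    (hsum : ∑ i, p i = 1) {I J : Finset (Fin n)}
    (h : (∑ i ∈ I, p i) ≤ ∑ i ∈ J, p i) : I ⊆ J := by
  intro k hk
  by_contra hkJ
  obtain ⟨s, hs⟩ := not_forall.mp (hvar k).1
  push_neg at hs
  have hsum1 : ∑ i, p i s = 1 := aux14_sum1 hsum s
  have hIs : p k s ≤ ∑ i ∈ I, p i s :=
    Finset.single_le_sum (fun i _ => (hprob i s).1) hk
  have hJsub : J ⊆ Finset.univ.erase k :=
    fun j hj => Finset.mem_erase.mpr ⟨fun e => hkJ (e ▸ hj), Finset.mem_univ j⟩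
  have hJs : ∑ i ∈ J, p i s ≤ ∑ i ∈ Finset.univ.erase k, p i s :=
    Finset.sum_le_sum_of_subset_of_nonneg hJsub fun i _ _ => (hprob i s).1
  have herase := Finset.sum_erase_add Finset.univ (fun i => p i s) (Finset.mem_univ k)
  have hle := h s
  simp only [Finset.sum_apply] at hle
  linarith

private lemma aux14_compl (hsum : ∑ i, p i = 1) (I : Finset (Fin n)) :
    (∑ i ∈ Iᶜ, p i) = 1 - ∑ i ∈ I, p i := by
  have h := Finset.sum_add_sum_compl I p
  rw [hsum] at h
  rw [← h]
  abel

private lemma aux14_prob (hprob : ∀ i, IsProb S (p i)) (hsum : ∑ i, p i = 1)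
    (I : Finset (Fin n)) : IsProb S (∑ i ∈ I, p i) := by
  intro s
  have hsum1 : ∑ i, p i s = 1 := aux14_sum1 hsum s
  simp only [Finset.sum_apply]
  refine ⟨Finset.sum_nonneg fun i _ => (hprob i s).1, ?_⟩
  calc ∑ i ∈ I, p i s ≤ ∑ i, p i s :=
        Finset.sum_le_sum_of_subset_of_nonneg (Finset.subset_univ I)
          fun i _ _ => (hprob i s).1
    _ = 1 := hsum1

end AuxStmt14

theorem stmt_14 {S : Type*} [Nonempty S] {n : ℕ} (hn : 2 ≤ n)
    (p : Fin n → (S → ℝ)) (hprob : ∀ i, IsProb S (p i))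
    (hvar : ∀ i, Varying S (p i)) (hsum : ∑ i, p i = 1) :
    IsAlg S {f | ∃ I : Finset (Fin n), f = ∑ i ∈ I, p i} ∧
    (∀ I J : Finset (Fin n), (∑ i ∈ I, p i) ≤ (∑ i ∈ J, p i) ↔ I ⊆ J) ∧
    (∀ I J : Finset (Fin n), (∑ i ∈ I, p i) = (∑ i ∈ J, p i) → I = J) ∧
    (∀ I : Finset (Fin n), (∑ i ∈ Iᶜ, p i) = 1 - ∑ i ∈ I, p i) ∧
    IsBooleanAlg S {f | ∃ I : Finset (Fin n), f = ∑ i ∈ I, p i} ∧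
    Set.ncard {f | ∃ I : Finset (Fin n), f = ∑ i ∈ I, p i} = 2 ^ n ∧
    (∀ f, IsAtomOf S {f | ∃ I : Finset (Fin n), f = ∑ i ∈ I, p i} f ↔ ∃ i, f = p i) := by
  classical
  set P : Set (S → ℝ) := {f | ∃ I : Finset (Fin n), f = ∑ i ∈ I, p i} with hP
  have hmem : ∀ I : Finset (Fin n), (∑ i ∈ I, p i) ∈ P := fun I => ⟨I, rfl⟩
  have hle : ∀ I J : Finset (Fin n), (∑ i ∈ I, p i) ≤ (∑ i ∈ J, p i) ↔ I ⊆ J :=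
    fun I J => ⟨aux14_subset hprob hvar hsum, aux14_mono hprob⟩
  have hinj : ∀ I J : Finset (Fin n), (∑ i ∈ I, p i) = (∑ i ∈ J, p i) → I = J :=
    fun I J h => subset_antisymm ((hle I J).mp h.le) ((hle J I).mp h.ge)
  have hcompl := aux14_compl hsum
  have hq0 : (∑ i ∈ (∅ : Finset (Fin n)), p i) = 0 := Finset.sum_empty
  have halg : IsAlg S P := by
    refine ⟨?_, ⟨∅, hq0.symm⟩, ?_, ?_⟩
    · rintro f ⟨I, rfl⟩
      exact aux14_prob hprob hsum I
    · rintro f ⟨I, rfl⟩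
      exact ⟨Iᶜ, (hcompl I).symm⟩
    · rintro f g h ⟨I, rfl⟩ ⟨J, rfl⟩ ⟨K, rfl⟩ h1 h2 h3
      rw [← hcompl J] at h1
      rw [← hcompl K] at h2
      rw [← hcompl I] at h3
      have dIJ : Disjoint I J := Finset.disjoint_left.mpr fun a ha hb =>
        Finset.mem_compl.mp ((hle I Jᶜ).mp h1 ha) hb
      have dJK : Disjoint J K := Finset.disjoint_left.mpr fun a ha hb =>
        Finset.mem_compl.mp ((hle J Kᶜ).mp h2 ha) hb
      have dKI : Disjoint K I := Finset.disjoint_left.mpr fun a ha hb =>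
        Finset.mem_compl.mp ((hle K Iᶜ).mp h3 ha) hb
      have dUK : Disjoint (I ∪ J) K := Finset.disjoint_union_left.mpr ⟨dKI.symm, dJK⟩
      exact ⟨(I ∪ J) ∪ K, by rw [Finset.sum_union dUK, Finset.sum_union dIJ]⟩
  have hinf : ∀ I J : Finset (Fin n),
      IsInfIn S P (∑ i ∈ I, p i) (∑ i ∈ J, p i) (∑ i ∈ I ∩ J, p i) := by
    intro I J
    refine ⟨hmem _, (hle _ _).mpr Finset.inter_subset_left,
      (hle _ _).mpr Finset.inter_subset_right, ?_⟩
    rintro u ⟨K, rfl⟩ h1 h2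
    exact (hle _ _).mpr (Finset.subset_inter ((hle _ _).mp h1) ((hle _ _).mp h2))
  have hsup : ∀ I J : Finset (Fin n),
      IsSupIn S P (∑ i ∈ I, p i) (∑ i ∈ J, p i) (∑ i ∈ I ∪ J, p i) := by
    intro I J
    refine ⟨hmem _, (hle _ _).mpr Finset.subset_union_left,
      (hle _ _).mpr Finset.subset_union_right, ?_⟩
    rintro u ⟨K, rfl⟩ h1 h2
    exact (hle _ _).mpr (Finset.union_subset ((hle _ _).mp h1) ((hle _ _).mp h2))
  have hinfu : ∀ f g m m' : S → ℝ, IsInfIn S P f g m → IsInfIn S P f g m' → m = m' :=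
    fun f g m m' h h' =>
      le_antisymm (h'.2.2.2 m h.1 h.2.1 h.2.2.1) (h.2.2.2 m' h'.1 h'.2.1 h'.2.2.1)
  have hsupu : ∀ f g m m' : S → ℝ, IsSupIn S P f g m → IsSupIn S P f g m' → m = m' :=
    fun f g m m' h h' =>
      le_antisymm (h.2.2.2 m' h'.1 h'.2.1 h'.2.2.1) (h'.2.2.2 m h.1 h.2.1 h.2.2.1)
  have hbool : IsBooleanAlg S P := by
    refine ⟨halg, ?_, ?_, ?_⟩
    · rintro f ⟨I, rfl⟩ g ⟨J, rfl⟩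
      exact ⟨⟨_, hinf I J⟩, ⟨_, hsup I J⟩⟩
    · rintro f ⟨I, rfl⟩ g ⟨J, rfl⟩ h ⟨K, rfl⟩ qr a pq pr b hqr ha hpq hpr hb
      obtain rfl : qr = ∑ i ∈ J ∪ K, p i := hsupu _ _ _ _ hqr (hsup J K)
      obtain rfl : pq = ∑ i ∈ I ∩ J, p i := hinfu _ _ _ _ hpq (hinf I J)
      obtain rfl : pr = ∑ i ∈ I ∩ K, p i := hinfu _ _ _ _ hpr (hinf I K)
      have ea : a = ∑ i ∈ I ∩ (J ∪ K), p i := hinfu _ _ _ _ ha (hinf I (J ∪ K))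
      have eb : b = ∑ i ∈ (I ∩ J) ∪ (I ∩ K), p i := hsupu _ _ _ _ hb (hsup (I ∩ J) (I ∩ K))
      rw [ea, eb, Finset.inter_union_distrib_left]
    · rintro f ⟨I, rfl⟩
      rw [← hcompl I]
      constructor
      · have h := hinf I Iᶜ
        rwa [Finset.inter_compl, Finset.sum_empty] at h
      · have h := hsup I Iᶜ
        rwa [Finset.union_compl, hsum] at h
  refine ⟨halg, hle, hinj, hcompl, hbool, ?_, ?_⟩
  · have hrange : P = Set.range (fun I : Finset (Fin n) => ∑ i ∈ I, p i) := by
      ext f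
      simp [hP, Set.mem_setOf_eq, eq_comm]
    rw [hrange, ← Set.image_univ,
      Set.ncard_image_of_injective _ (fun I J h => hinj I J h),
      Set.ncard_univ, Nat.card_eq_fintype_card, Fintype.card_finset, Fintype.card_fin]
  · intro f
    constructor
    · rintro ⟨⟨I, rfl⟩, hne, hmin⟩
      have hIne : I ≠ ∅ := by
        rintro rfl
        exact hne hq0
      obtain ⟨i, hi⟩ := Finset.nonempty_iff_ne_empty.mpr hIne
      have h1 : (∑ j ∈ ({i} : Finset (Fin n)), p j) ≤ ∑ j ∈ I, p j :=
        (hle _ _).mpr (Finset.singleton_subset_iff.mpr hi)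
      have hne1 : (∑ j ∈ ({i} : Finset (Fin n)), p j) ≠ (0 : S → ℝ) := by
        intro h0
        have := hinj {i} ∅ (by rw [h0, hq0])
        simp at this
      have heq := hmin _ (hmem {i}) hne1 h1
      exact ⟨i, by rw [← heq, Finset.sum_singleton]⟩
    · rintro ⟨i, rfl⟩
      have hsing : p i = ∑ j ∈ ({i} : Finset (Fin n)), p j := (Finset.sum_singleton _ _).symm
      refine ⟨⟨{i}, hsing⟩, ?_, ?_⟩
      · intro h0
        exact (hvar i).1 fun s => by rw [h0]; norm_num
      · rintro g ⟨K, rfl⟩ hg0 hgle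
        rw [hsing] at hgle
        have hKsub : K ⊆ {i} := (hle _ _).mp hgle
        have hKne : K ≠ ∅ := by
          rintro rfl
          exact hg0 hq0
        rcases Finset.subset_singleton_iff.mp hKsub with h | h
        · exact absurd h hKne
        · rw [h, Finset.sum_singleton]
end

section
/- Let n ≥ 2 and let P be an algebra of S-probabilities that is a Boolean algebra of S-probabilities with exactly 2^n elements. Then there exist varying S-probabilities p₁, …, pₙ ∈ P (namely the atoms of the poset (P, ≤)) such that p₁ + ⋯ + pₙ = 1 (the constant function 1) and P = {Σ_{i∈I} pᵢ : I ⊆ {1, …, n}}. -/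
namespace Stmt15Aux
variable {S : Type*} {P : Set (S → ℝ)}

theorem inf_unique {p q m m' : S → ℝ} (h : IsInfIn S P p q m) (h' : IsInfIn S P p q m') :
    m = m' :=
  le_antisymm (h'.2.2.2 m h.1 h.2.1 h.2.2.1) (h.2.2.2 m' h'.1 h'.2.1 h'.2.2.1)

theorem sup_unique {p q j j' : S → ℝ} (h : IsSupIn S P p q j) (h' : IsSupIn S P p q j') :
    j = j' :=
  le_antisymm (h.2.2.2 j' h'.1 h'.2.1 h'.2.2.1) (h'.2.2.2 j h.1 h.2.1 h.2.2.1)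

variable (hP : IsBooleanAlg S P)
include hP

theorem zero_mem : (0 : S → ℝ) ∈ P := hP.1.2.1
theorem one_mem : (1 : S → ℝ) ∈ P := by simpa using hP.1.2.2.1 0 hP.1.2.1
theorem compl_mem {p : S → ℝ} (hp : p ∈ P) : 1 - p ∈ P := hP.1.2.2.1 p hp
theorem nonneg {p : S → ℝ} (hp : p ∈ P) : (0 : S → ℝ) ≤ p := fun s => (hP.1.1 p hp s).1
theorem le_one {p : S → ℝ} (hp : p ∈ P) : p ≤ 1 := fun s => (hP.1.1 p hp s).2

theorem add_mem {p q : S → ℝ} (hp : p ∈ P) (hq : q ∈ P) (h : p ≤ 1 - q) : p + q ∈ P := by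
  have := hP.1.2.2.2 p q 0 hp hq (zero_mem hP) h (by simpa using le_one hP hq)
    (by simpa [sub_nonneg] using le_one hP hp)
  simpa using this

/-- The supremum of two orthogonal elements is their pointwise sum. -/
theorem sup_orth_eq {p q j : S → ℝ} (hp : p ∈ P) (hq : q ∈ P)
    (horth : p ≤ 1 - q) (hj : IsSupIn S P p q j) : j = p + q := by
  have hpq : p + q ∈ P := add_mem hP hp hq horth
  have h1 : j ≤ p + q := hj.2.2.2 _ hpq
    (fun s => by have h0 := nonneg hP hq s; simp at h0 ⊢; linarith)
    (fun s => by have h0 := nonneg hP hp s; simp at h0 ⊢; linarith)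
  have ht : p + q + (1 - j) ∈ P :=
    hP.1.2.2.2 p q (1 - j) hp hq (compl_mem hP hj.1) horth
      (by simpa [sub_sub_cancel] using hj.2.2.1)
      (fun s => by have := hj.2.1 s; simp at this ⊢; linarith)
  have h2 : p + q ≤ j := fun s => by
    have := (hP.1.1 _ ht s).2
    simp at this ⊢; linarith
  exact le_antisymm h1 h2

noncomputable def supP (x y : ↥P) : ↥P :=
  ⟨((hP.2.1 x.1 x.2 y.1 y.2).2).choose, ((hP.2.1 x.1 x.2 y.1 y.2).2).choose_spec.1⟩

theorem supP_spec (x y : ↥P) : IsSupIn S P x.1 y.1 (supP hP x y).1 :=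
  ((hP.2.1 x.1 x.2 y.1 y.2).2).choose_spec

noncomputable def infP (x y : ↥P) : ↥P :=
  ⟨((hP.2.1 x.1 x.2 y.1 y.2).1).choose, ((hP.2.1 x.1 x.2 y.1 y.2).1).choose_spec.1⟩

theorem infP_spec (x y : ↥P) : IsInfIn S P x.1 y.1 (infP hP x y).1 :=
  ((hP.2.1 x.1 x.2 y.1 y.2).1).choose_spec

@[reducible]
noncomputable def lat : Lattice ↥P :=
  { (inferInstance : PartialOrder ↥P) with
    sup := supP hP
    le_sup_left := fun a b => (supP_spec hP a b).2.1
    le_sup_right := fun a b => (supP_spec hP a b).2.2.1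
    sup_le := fun a b c hac hbc => (supP_spec hP a b).2.2.2 c.1 c.2 hac hbc
    inf := infP hP
    inf_le_left := fun a b => (infP_spec hP a b).2.1
    inf_le_right := fun a b => (infP_spec hP a b).2.2.1
    le_inf := fun a b c hab hac => (infP_spec hP b c).2.2.2 a.1 a.2 hab hac }

@[reducible]
noncomputable def distLat : DistribLattice ↥P :=
  letI := lat hP
  DistribLattice.ofInfSupLe fun a b c => le_of_eq <| Subtype.ext <|
    hP.2.2.1 a.1 a.2 b.1 b.2 c.1 c.2 _ _ _ _ _
      (supP_spec hP b c) (infP_spec hP a (supP hP b c))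
      (infP_spec hP a b) (infP_spec hP a c) (supP_spec hP (infP hP a b) (infP hP a c))

@[reducible]
noncomputable def ba : BooleanAlgebra ↥P :=
  letI := distLat hP
  { (distLat hP) with
    compl := fun x => ⟨1 - x.1, compl_mem hP x.2⟩
    top := ⟨1, one_mem hP⟩
    bot := ⟨0, zero_mem hP⟩
    sdiff := fun x y => infP hP x ⟨1 - y.1, compl_mem hP y.2⟩
    himp := fun x y => supP hP y ⟨1 - x.1, compl_mem hP x.2⟩
    inf_compl_le_bot := fun x => le_of_eq <| Subtype.ext <|
      inf_unique (infP_spec hP x ⟨1 - x.1, compl_mem hP x.2⟩) (hP.2.2.2 x.1 x.2).1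
    top_le_sup_compl := fun x => le_of_eq <| Subtype.ext <|
      (sup_unique (supP_spec hP x ⟨1 - x.1, compl_mem hP x.2⟩) (hP.2.2.2 x.1 x.2).2).symm
    le_top := fun a => le_one hP a.2
    bot_le := fun a => nonneg hP a.2
    sdiff_eq := fun _ _ => rfl
    himp_eq := fun _ _ => rfl }

end Stmt15Aux

theorem stmt_15 {S : Type*} [Nonempty S] {n : ℕ} (hn : 2 ≤ n)
    {P : Set (S → ℝ)} (hP : IsBooleanAlg S P) (hcard : P.ncard = 2 ^ n) :
    ∃ p : Fin n → (S → ℝ),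
      (∀ i, p i ∈ P ∧ Varying S (p i) ∧ IsAtomOf S P (p i)) ∧
      ∑ i, p i = 1 ∧
      P = {f | ∃ I : Finset (Fin n), f = ∑ i ∈ I, p i} := by
  classical
  have hfin : P.Finite := by
    by_contra h
    have h0 : P.ncard = 0 := Set.Infinite.ncard h
    have : (0:ℕ) < 2 ^ n := Nat.pow_pos (by norm_num)
    omega
  letI : Fintype ↥P := hfin.fintype
  letI : BooleanAlgebra ↥P := Stmt15Aux.ba hP
  have coe_sup : ∀ x y : ↥P, IsSupIn S P x.1 y.1 ((x ⊔ y : ↥P) : S → ℝ) :=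
    fun x y => Stmt15Aux.supP_spec hP x y
  have coe_inf : ∀ x y : ↥P, IsInfIn S P x.1 y.1 ((x ⊓ y : ↥P) : S → ℝ) :=
    fun x y => Stmt15Aux.infP_spec hP x y
  have coe_compl : ∀ x : ↥P, ((xᶜ : ↥P) : S → ℝ) = 1 - x.1 := fun _ => rfl
  have coe_bot : ((⊥ : ↥P) : S → ℝ) = 0 := rfl
  have coe_top : ((⊤ : ↥P) : S → ℝ) = 1 := rfl
  -- every element is the sup of the atoms below it
  have atom_sup : ∀ b : ↥P,
      ((Finset.univ.filter (fun a : {a : ↥P // IsAtom a} => a.1 ≤ b)).sup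
        (fun a => a.1)) = b := by
    intro b
    set c := (Finset.univ.filter (fun a : {a : ↥P // IsAtom a} => a.1 ≤ b)).sup
        (fun a => a.1) with hc
    have hcb : c ≤ b := Finset.sup_le (by simp)
    have hbc : b \ c = ⊥ := by
      by_contra hne
      obtain ⟨a, ha, hab⟩ := (eq_bot_or_exists_atom_le (b \ c)).resolve_left hne
      have h1 : a ≤ b := hab.trans sdiff_le
      have hamem : (⟨a, ha⟩ : {a : ↥P // IsAtom a}) ∈
          Finset.univ.filter (fun a : {a : ↥P // IsAtom a} => a.1 ≤ b) := by simp [h1]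
      have h2 : a ≤ c := hc ▸ Finset.le_sup (f := fun a : {a : ↥P // IsAtom a} => a.1) hamem
      have h3 : a ≤ cᶜ := hab.trans (by rw [sdiff_eq]; exact inf_le_right)
      exact ha.1 (le_bot_iff.mp (by simpa using le_inf h2 h3))
    exact le_antisymm hcb (sdiff_eq_bot_iff.mp hbc)
  have atom_disj : ∀ a b : {a : ↥P // IsAtom a}, a ≠ b → Disjoint a.1 b.1 :=
    fun a b hab => a.2.disjoint_of_ne b.2 (fun h => hab (Subtype.ext h))
  have key : ∀ t t' : Finset {a : ↥P // IsAtom a},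
      t.sup (fun a => a.1) = t'.sup (fun a => a.1) → t ⊆ t' := by
    intro t t' h a hat
    by_contra hat'
    have h1 : a.1 ≤ t'.sup (fun a => a.1) := h ▸ Finset.le_sup hat
    have h2 : Disjoint a.1 (t'.sup (fun a => a.1)) :=
      Finset.disjoint_sup_right.mpr (fun b hb => atom_disj a b (by rintro rfl; exact hat' hb))
    exact a.2.1 (le_bot_iff.mp (h2 le_rfl h1))
  have Fbij : Function.Bijective
      (fun t : Finset {a : ↥P // IsAtom a} => t.sup (fun a => a.1)) := by
    constructor
    · intro t t' h
      exact Finset.Subset.antisymm (key t t' h) (key t' t h.symm)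
    · intro b
      exact ⟨_, atom_sup b⟩
  have hcardP : Fintype.card ↥P = 2 ^ n := by
    rw [← Nat.card_eq_fintype_card, Nat.card_coe_set_eq, hcard]
  have hcardA : Fintype.card {a : ↥P // IsAtom a} = n := by
    have h1 := Fintype.card_of_bijective Fbij
    rw [Fintype.card_finset, hcardP] at h1
    exact Nat.pow_right_injective (le_refl 2) h1
  have e : Fin n ≃ {a : ↥P // IsAtom a} := (Fintype.equivFinOfCardEq hcardA).symm
  -- sup of a finset of atoms is the pointwise sum
  have sup_sum : ∀ t : Finset {a : ↥P // IsAtom a},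
      ((t.sup (fun a => a.1) : ↥P) : S → ℝ) = ∑ a ∈ t, (a.1.1 : S → ℝ) := by
    intro t
    induction t using Finset.cons_induction with
    | empty => simpa using coe_bot
    | cons a t hat ih =>
      have hd : Disjoint a.1 (t.sup (fun a => a.1)) :=
        Finset.disjoint_sup_right.mpr
          (fun b hb => atom_disj a b (by rintro rfl; exact hat hb))
      have horth : a.1.1 ≤ 1 - (t.sup (fun a => a.1) : ↥P).1 := by
        have h1 : a.1 ≤ (t.sup (fun a => a.1) : ↥P)ᶜ := le_compl_iff_disjoint_right.mpr hd
        rw [← coe_compl]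
        exact h1
      rw [Finset.sup_cons, Finset.sum_cons, ← ih]
      exact Stmt15Aux.sup_orth_eq hP a.1.2 (t.sup (fun a => a.1) : ↥P).2 horth
        (coe_sup a.1 (t.sup (fun a => a.1)))
  have htop : (1 : S → ℝ) = ∑ a : {a : ↥P // IsAtom a}, (a.1.1 : S → ℝ) := by
    have h0 := atom_sup ⊤
    rw [Finset.filter_true_of_mem (fun a _ => le_top)] at h0
    rw [← sup_sum Finset.univ, h0, coe_top]
  refine ⟨fun i => (e i).1.1, ?_, ?_, ?_⟩
  · intro i
    have hne0 : (e i).1.1 ≠ 0 := by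
      intro h
      exact (e i).2.1 (Subtype.ext h)
    have hmem := (e i).1.2
    refine ⟨hmem, ⟨?_, ?_⟩, hmem, hne0, ?_⟩
    · -- not everywhere ≤ 1/2
      intro h
      have hle : (e i).1.1 ≤ 1 - (e i).1.1 := fun s => by
        have := h s; simp; linarith
      have hinf := (hP.2.2.2 (e i).1.1 hmem).1
      have h0 : (e i).1.1 ≤ 0 := hinf.2.2.2 _ hmem le_rfl hle
      exact hne0 (le_antisymm h0 (Stmt15Aux.nonneg hP hmem))
    · -- not everywhere ≥ 1/2
      intro h
      have hle : 1 - (e i).1.1 ≤ (e i).1.1 := fun s => by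
        have := h s; simp; linarith
      have hinf := (hP.2.2.2 (e i).1.1 hmem).1
      have h0 : 1 - (e i).1.1 ≤ 0 :=
        hinf.2.2.2 _ (Stmt15Aux.compl_mem hP hmem) hle le_rfl
      have h1 : (e i).1.1 = 1 := by
        funext s
        have h2 := h0 s
        have h3 := Stmt15Aux.le_one hP hmem s
        simp at h2 h3 ⊢
        linarith
      have htopi : (e i).1 = ⊤ := Subtype.ext (h1.trans coe_top.symm)
      -- another atom
      have hji : ∃ j : Fin n, j ≠ i := by
        rcases Decidable.eq_or_ne i ⟨0, by omega⟩ with h | h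
        · exact ⟨⟨1, by omega⟩, by rw [h]; intro hc; exact absurd (congrArg Fin.val hc) (by norm_num)⟩
        · exact ⟨⟨0, by omega⟩, fun hc => h hc.symm⟩
      obtain ⟨j, hj⟩ := hji
      have hne : e j ≠ e i := fun hc => hj (e.injective hc)
      have hd := atom_disj (e j) (e i) hne
      have : (e j).1 ≤ ⊥ := hd le_rfl (htopi ▸ le_top)
      exact (e j).2.1 (le_bot_iff.mp this)
    · -- minimality
      intro g hg hg0 hgle
      by_contra hne
      have hlt : (⟨g, hg⟩ : ↥P) < (e i).1 := lt_of_le_of_ne hgle (fun hc => hne (congrArg Subtype.val hc))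
      have := (e i).2.2 _ hlt
      exact hg0 (congrArg Subtype.val this)
  · exact (Equiv.sum_comp e (fun a => (a.1.1 : S → ℝ))).trans htop.symm
  · ext f
    constructor
    · intro hf
      have h0 := atom_sup ⟨f, hf⟩
      refine ⟨Finset.univ.filter (fun i => (e i).1 ≤ ⟨f, hf⟩), ?_⟩
      have h2 : ∑ i ∈ Finset.univ.filter (fun i => (e i).1 ≤ ⟨f, hf⟩), ((e i).1.1 : S → ℝ)
          = ∑ a ∈ Finset.univ.filter
            (fun a : {a : ↥P // IsAtom a} => a.1 ≤ ⟨f, hf⟩), (a.1.1 : S → ℝ) :=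
        Finset.sum_equiv e (by simp) (fun i _ => rfl)
      rw [h2, ← sup_sum, h0]
    · rintro ⟨I, rfl⟩
      have h1 : ∑ i ∈ I, (e i).1.1 = ∑ a ∈ Finset.univ.filter
          (fun a : {a : ↥P // IsAtom a} => e.symm a ∈ I), (a.1.1 : S → ℝ) :=
        Finset.sum_equiv e (by simp) (fun i _ => rfl)
      rw [h1, ← sup_sum]
      exact ((Finset.univ.filter
        (fun a : {a : ↥P // IsAtom a} => e.symm a ∈ I)).sup
        (fun a : {a : ↥P // IsAtom a} => a.1) : ↥P).2
end
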